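/- arXiv:2107.06694 — 3 statements merged into one kernel-verified Lean document; each statement's English description precedes it below -/
import Mathlib

section
/- (Claim 4, backward direction) Let P_Z be popular but not stable in G' = G[V'], and let S be a matching on G[V ∖ V'] that is stable, covers exactly V ∖ V', and such that P = P_Z ∪ S induces the edge labeling: (+,−) on edges incident to U with + at the U-endpoint, (−,−) on edges between D and V ∖ V', and (+,−) with + at v' on edges (v',x) with v' ∈ V' ∖ (D ∪ U), x ∈ V ∖ V', and x ≻_{v'} P(v'). Then P is a popular matching in G leaving exactly U uncovered. -/
/-- A roommates instance: a simple graph together with, for each vertex,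
a ranking of vertices (lower rank = more preferred), injective on neighbors. -/
structure Roommates (V : Type*) where
  G : SimpleGraph V
  rank : V → V → ℕ
  rank_inj : ∀ u a b, G.Adj u a → G.Adj u b → rank u a = rank u b → a = b

variable {V : Type*}

/-- `M` encodes a matching: `M u = some v` means `u` is matched to `v`. -/
def IsMatching (R : Roommates V) (M : V → Option V) : Prop :=
  ∀ u v, M u = some v → R.G.Adj u v ∧ M v = some u

/-- Vertex `v` prefers matching `M` to matching `M'`. -/
def Prefers (R : Roommates V) (M M' : V → Option V) (v : V) : Prop :=
  (∃ w, M v = some w ∧ M' v = none) ∨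
  (∃ w w', M v = some w ∧ M' v = some w' ∧ R.rank v w < R.rank v w')

/-- `M` is popular: it never loses a head-to-head election. -/
def Popular [Fintype V] (R : Roommates V) (M : V → Option V) : Prop :=
  ∀ M', IsMatching R M' →
    {v | Prefers R M' M v}.ncard ≤ {v | Prefers R M M' v}.ncard

/-- Edge `(u,v)` blocks `M`: each endpoint is unmatched or prefers the other
endpoint to its partner. -/
def Blocks (R : Roommates V) (M : V → Option V) (u v : V) : Prop :=
  R.G.Adj u v ∧ M u ≠ some v ∧
  (∀ w, M u = some w → R.rank u v < R.rank u w) ∧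
  (∀ w, M v = some w → R.rank v u < R.rank v w)

def IsStable (R : Roommates V) (M : V → Option V) : Prop :=
  ∀ u v, ¬ Blocks R M u v

/-- `u` votes `+` for `v` against its situation in `M`
(true when `u` is unmatched or prefers `v` to its `M`-partner). -/
def VotePlus (R : Roommates V) (M : V → Option V) (u v : V) : Prop :=
  ∀ w, M u = some w → R.rank u v < R.rank u w

/-- Non-matching edge of `G_M`, i.e. not labeled `(−,−)`. -/
def NonMatchEdge (R : Roommates V) (M : V → Option V) (u v : V) : Prop :=
  R.G.Adj u v ∧ M u ≠ some v ∧ (VotePlus R M u v ∨ VotePlus R M v u)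

/-- `AltList A M b l`: the list of vertices `l` forms an alternating sequence,
whose first edge is a matching edge if `b = true` and an allowed (`A`)
non-matching edge if `b = false`. -/
def AltList (A : V → V → Prop) (M : V → Option V) : Bool → List V → Prop
  | _, [] => True
  | _, [_] => True
  | true, u :: v :: rest => M u = some v ∧ AltList A M false (v :: rest)
  | false, u :: v :: rest => A u v ∧ AltList A M true (v :: rest)

/-- A matching of the subgraph induced on `W`. -/
def IsMatchingOn (R : Roommates V) (W : Set V) (M : V → Option V) : Prop :=
  IsMatching R M ∧ ∀ u v, M u = some v → u ∈ W ∧ v ∈ W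

/-- Popularity within the subgraph induced on `W`. -/
def PopularOn (R : Roommates V) (W : Set V) (M : V → Option V) : Prop :=
  ∀ M', IsMatchingOn R W M' →
    {v | v ∈ W ∧ Prefers R M' M v}.ncard ≤ {v | v ∈ W ∧ Prefers R M M' v}.ncard

/-- Stability within the subgraph induced on `W`. -/
def StableOn (R : Roommates V) (W : Set V) (M : V → Option V) : Prop :=
  ∀ u v, u ∈ W → v ∈ W → ¬ Blocks R M u v

open scoped Classical
set_option linter.unusedSectionVars false

section Machinery

variable {V : Type*} [Fintype V]

/-- Integer score of vertex `v` comparing matching `A` (new) to `B` (old). -/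
noncomputable def sc (R : Roommates V) (A B : V → Option V) (v : V) : ℤ :=
  (if Prefers R A B v then 1 else 0) - (if Prefers R B A v then 1 else 0)

lemma prefers_some_none {R : Roommates V} {A B : V → Option V} {v u : V}
    (hA : A v = some u) (hB : B v = none) : Prefers R A B v :=
  Or.inl ⟨u, hA, hB⟩

lemma not_prefers_none {R : Roommates V} {A B : V → Option V} {v : V}
    (hA : A v = none) : ¬ Prefers R A B v := by
  rintro (⟨w, hw, -⟩ | ⟨w, w', hw, -, -⟩) <;> simp [hA] at hw

lemma not_prefers_some_some {R : Roommates V} {A B : V → Option V} {v u w : V}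
    (hA : A v = some u) (hB : B v = some w) (h : ¬ R.rank v u < R.rank v w) :
    ¬ Prefers R A B v := by
  rintro (⟨a, ha, hb⟩ | ⟨a, b, ha, hb, hr⟩)
  · rw [hB] at hb; exact Option.some_ne_none _ hb
  · rw [hA] at ha; rw [hB] at hb
    cases Option.some.inj ha; cases Option.some.inj hb; exact h hr

lemma prefers_some_some {R : Roommates V} {A B : V → Option V} {v u w : V}
    (hA : A v = some u) (hB : B v = some w) (h : R.rank v u < R.rank v w) :
    Prefers R A B v := Or.inr ⟨u, w, hA, hB, h⟩

lemma sc_none_none {R : Roommates V} {A B : V → Option V} {v : V}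
    (hA : A v = none) (hB : B v = none) : sc R A B v = 0 := by
  simp [sc, not_prefers_none hA, not_prefers_none hB]

lemma sc_some_none {R : Roommates V} {A B : V → Option V} {v u : V}
    (hA : A v = some u) (hB : B v = none) : sc R A B v = 1 := by
  simp [sc, prefers_some_none hA hB, not_prefers_none hB]

lemma sc_none_some {R : Roommates V} {A B : V → Option V} {v u : V}
    (hA : A v = none) (hB : B v = some u) : sc R A B v = -1 := by
  simp [sc, prefers_some_none hB hA, not_prefers_none hA]

lemma sc_eq {R : Roommates V} {A B : V → Option V} {v : V}
    (h : A v = B v) : sc R A B v = 0 := by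
  rcases hB : B v with _ | u
  · exact sc_none_none (h.trans hB) hB
  · have hA : A v = some u := h.trans hB
    have h1 : ¬ R.rank v u < R.rank v u := lt_irrefl _
    simp [sc, not_prefers_some_some hA hB h1, not_prefers_some_some hB hA h1]

/-- main evaluation: both matched, to distinct partners that are both neighbours. -/
lemma sc_some_some {R : Roommates V} {A B : V → Option V} {v u w : V}
    (hA : A v = some u) (hB : B v = some w) (hne : u ≠ w)
    (hadju : R.G.Adj v u) (hadjw : R.G.Adj v w) :
    sc R A B v = if R.rank v u < R.rank v w then 1 else -1 := by
  have hrne : R.rank v u ≠ R.rank v w := fun h => hne (R.rank_inj v u w hadju hadjw h)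
  by_cases h : R.rank v u < R.rank v w
  · have h2 : ¬ R.rank v w < R.rank v u := fun h' => absurd (h.trans h') (lt_irrefl _)
    simp [sc, h, prefers_some_some hA hB h, not_prefers_some_some hB hA h2]
  · have h2 : R.rank v w < R.rank v u := lt_of_le_of_ne (not_lt.1 h) hrne.symm
    simp [sc, h, prefers_some_some hB hA h2, not_prefers_some_some hA hB h]

lemma sc_bounds {R : Roommates V} (A B : V → Option V) (v : V) :
    sc R A B v ≤ 1 ∧ -1 ≤ sc R A B v := by
  unfold sc; split <;> split <;> omega

/-- translate an `ncard` comparison into a sum of scores. -/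
lemma ncard_le_iff_sum {R : Roommates V} (A B : V → Option V) (W : Set V) :
    ({v | v ∈ W ∧ Prefers R A B v}.ncard ≤ {v | v ∈ W ∧ Prefers R B A v}.ncard)
      ↔ (∑ v ∈ W.toFinset, sc R A B v) ≤ 0 := by
  have h1 : {v | v ∈ W ∧ Prefers R A B v}.ncard
      = (W.toFinset.filter (fun v => Prefers R A B v)).card := by
    rw [Set.ncard_eq_toFinset_card']
    congr 1
    ext v
    simp [Set.mem_toFinset]
  have h2 : {v | v ∈ W ∧ Prefers R B A v}.ncard
      = (W.toFinset.filter (fun v => Prefers R B A v)).card := by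
    rw [Set.ncard_eq_toFinset_card']
    congr 1
    ext v
    simp [Set.mem_toFinset]
  have h3 : (∑ v ∈ W.toFinset, sc R A B v)
      = ((W.toFinset.filter (fun v => Prefers R A B v)).card : ℤ)
        - ((W.toFinset.filter (fun v => Prefers R B A v)).card : ℤ) := by
    unfold sc
    rw [Finset.sum_sub_distrib]
    simp [Finset.sum_boole]
  rw [h1, h2, h3]
  omega

end Machinery
section Machinery2

variable {V : Type*} [Fintype V]

lemma sum_univ_eq_sum_of_vanish (W : Set V) (f : V → ℤ) (h0 : ∀ v ∉ W, f v = 0) :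
    ∑ v, f v = ∑ v ∈ W.toFinset, f v := by
  refine (Finset.sum_subset (Finset.subset_univ _) ?_).symm
  intro v _ hv
  exact h0 v (by simpa [Set.mem_toFinset] using hv)

lemma sum_pair_involution (s : Finset V) (M : V → Option V)
    (hsym : ∀ u v, M u = some v → M v = some u)
    (hmem : ∀ v ∈ s, ∃ u, M v = some u ∧ u ∈ s) (f : V → ℤ) :
    ∑ v ∈ s, f ((M v).getD v) = ∑ v ∈ s, f v := by
  refine Finset.sum_nbij' (fun v => (M v).getD v) (fun v => (M v).getD v) ?_ ?_ ?_ ?_ ?_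
  · intro a ha
    obtain ⟨u, hu, hus⟩ := hmem a ha
    simpa [hu] using hus
  · intro a ha
    obtain ⟨u, hu, hus⟩ := hmem a ha
    simpa [hu] using hus
  · intro a ha
    obtain ⟨u, hu, hus⟩ := hmem a ha
    simp [hu, hsym a u hu]
  · intro a ha
    obtain ⟨u, hu, hus⟩ := hmem a ha
    simp [hu, hsym a u hu]
  · intro a ha; rfl

lemma sum_le_of_pairs (M : V → Option V)
    (hsym : ∀ u v, M u = some v → M v = some u)
    (f : V → ℤ) (h0 : ∀ v, M v = none → f v ≤ 0)
    (h2 : ∀ u v, M u = some v → f u + f v ≤ 0) :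
    ∑ v, f v ≤ 0 := by
  classical
  set s : Finset V := Finset.univ.filter (fun v => (M v).isSome) with hs
  have hmem : ∀ v ∈ s, ∃ u, M v = some u ∧ u ∈ s := by
    intro v hv
    rw [hs, Finset.mem_filter] at hv
    obtain ⟨u, hu⟩ := Option.isSome_iff_exists.1 hv.2
    exact ⟨u, hu, by simp [hs, Option.isSome_iff_exists, hsym v u hu]⟩
  have key : ∑ v ∈ s, f v ≤ 0 := by
    have h := sum_pair_involution s M hsym hmem f
    have hle : ∑ v ∈ s, (f v + f ((M v).getD v)) ≤ 0 := by
      refine Finset.sum_nonpos ?_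
      intro v hv
      obtain ⟨u, hu, _⟩ := hmem v hv
      simpa [hu] using h2 v u hu
    rw [Finset.sum_add_distrib, h] at hle
    linarith
  have split : ∑ v, f v = ∑ v ∈ s, f v + ∑ v ∈ sᶜ, f v := by
    rw [Finset.sum_add_sum_compl]
  have hc : ∑ v ∈ sᶜ, f v ≤ 0 := by
    refine Finset.sum_nonpos ?_
    intro v hv
    rw [Finset.mem_compl, hs, Finset.mem_filter] at hv
    refine h0 v ?_
    rcases hM : M v with _ | u
    · rfl
    · exact absurd (by simp [hM]) (fun h => hv ⟨Finset.mem_univ v, h⟩)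
  omega

lemma sum_ge_of_pairs (s : Finset V) (M : V → Option V)
    (hsym : ∀ u v, M u = some v → M v = some u)
    (hmem : ∀ v ∈ s, ∃ u, M v = some u ∧ u ∈ s) (f : V → ℤ)
    (h2 : ∀ u v, u ∈ s → v ∈ s → M u = some v → 0 ≤ f u + f v) :
    0 ≤ ∑ v ∈ s, f v := by
  have h := sum_pair_involution s M hsym hmem f
  have hge : 0 ≤ ∑ v ∈ s, (f v + f ((M v).getD v)) := by
    refine Finset.sum_nonneg ?_
    intro v hv
    obtain ⟨u, hu, hus⟩ := hmem v hv
    simpa [hu] using h2 v u hv hus hu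
  rw [Finset.sum_add_distrib, h] at hge
  linarith

end Machinery2
section CtxDef

variable (V : Type*) [Fintype V]

/-- the allowed non-matching edges within `V'` (as in the definition of `D`). -/
def Arel (R : Roommates V) (PZ : V → Option V) (V' : Set V) (a b : V) : Prop :=
  a ∈ V' ∧ b ∈ V' ∧ NonMatchEdge R PZ a b

/-- A bundled context containing everything needed for the popularity proof. -/
structure Ctx where
  R : Roommates V
  PZ : V → Option V
  V' : Set V
  P : V → Option V
  hPZm : IsMatching R PZ
  hPZV' : ∀ u v, PZ u = some v → u ∈ V' ∧ v ∈ V'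
  hPm : IsMatching R P
  hPV' : ∀ v ∈ V', P v = PZ v
  hpop : PopularOn R V' PZ
  hbadloc : ∀ x y, R.G.Adj x y → P x ≠ some y → VotePlus R P x y →
    VotePlus R P y x → x ∈ V' ∧ y ∈ V'
  hcut : ∀ (l : List V) (x y : V) (t : List V) (w : V),
      l = x :: y :: t → x ∈ V' → y ∈ V' → Blocks R PZ x y →
      AltList (Arel V R PZ V') PZ false l →
      l.Nodup → Odd l.length → l.getLast? = some w →
      ∀ b, b ∉ V' → R.G.Adj w b → ¬ VotePlus R P w b ∧ ¬ VotePlus R P b w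

variable {V}

/-- the symmetric-difference alternating trail structure built from a blocking
edge of a matching `M`: an even list alternating non-matching (w.r.t. `PZ`)
edges of `M` with edges of `PZ`. -/
inductive TWf (c : Ctx V) (M : V → Option V) : List V → Prop
  | pair {a b : V} (hab : Arel V c.R c.PZ c.V' a b) (hM : M a = some b) :
      TWf c M [a, b]
  | cons {a b c' : V} {rest : List V} (hab : Arel V c.R c.PZ c.V' a b)
      (hM : M a = some b) (hPZ : c.PZ b = some c') (h : TWf c M (c' :: rest)) :
      TWf c M (a :: b :: c' :: rest)

end CtxDef

namespace Ctx

variable {V : Type*} [Fintype V] (c : Ctx V)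

lemma votes_eq {v : V} (hv : v ∈ c.V') (u : V) :
    VotePlus c.R c.P v u ↔ VotePlus c.R c.PZ v u := by
  unfold VotePlus; rw [c.hPV' v hv]

lemma pz_out {v : V} (hv : v ∉ c.V') : c.PZ v = none := by
  rcases h : c.PZ v with _ | u
  · rfl
  · exact absurd (c.hPZV' v u h).1 hv

lemma hpop_sum {N : V → Option V} (hN : IsMatchingOn c.R c.V' N) :
    ∑ v, sc c.R N c.PZ v ≤ 0 := by
  have h := c.hpop N hN
  rw [ncard_le_iff_sum] at h
  rw [sum_univ_eq_sum_of_vanish c.V' _ ?_]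
  · exact h
  · intro v hv
    have hN0 : N v = none := by
      rcases h2 : N v with _ | u
      · rfl
      · exact absurd (hN.2 v u h2).1 hv
    exact sc_none_none hN0 (c.pz_out hv)

variable {M : V → Option V}

lemma twf_ne_nil {l : List V} (h : TWf c M l) : l ≠ [] := by
  cases h <;> simp

lemma twf_even {l : List V} (h : TWf c M l) : Even l.length := by
  induction h with
  | pair _ _ => exact ⟨1, rfl⟩
  | cons _ _ _ _ ih =>
      obtain ⟨r, hr⟩ := ih
      exact ⟨r + 1, by simp at hr ⊢; omega⟩

lemma twf_sub {l : List V} (h : TWf c M l) : ∀ v ∈ l, v ∈ c.V' := by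
  induction h with
  | pair hab _ => intro v hv
                  rcases List.mem_pair.1 hv with rfl | rfl
                  · exact hab.1
                  · exact hab.2.1
  | cons hab _ _ _ ih =>
      intro v hv
      rcases List.mem_cons.1 hv with rfl | hv
      · exact hab.1
      rcases List.mem_cons.1 hv with rfl | hv
      · exact hab.2.1
      · exact ih v hv

end Ctx
namespace Ctx

variable {V : Type*} [Fintype V] (c : Ctx V) {M : V → Option V}

lemma mem_of_getLast?' {l : List V} {z : V} (h : l.getLast? = some z) : z ∈ l := by
  obtain ⟨h', h2⟩ := List.mem_getLast?_eq_getLast (l := l) (x := z) h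
  rw [h2]; exact List.getLast_mem h'

lemma twf_getLast_tail {a : V} {t : List V} (h : TWf c M (a :: t)) :
    (a :: t).getLast? = t.getLast? := by
  cases h with
  | pair _ _ => rfl
  | cons _ _ _ _ => rfl

lemma twf_M1 (hsym : ∀ u v, M u = some v → M v = some u) {l : List V}
    (h : TWf c M l) : ∀ v ∈ l, ∃ u, M v = some u ∧ u ∈ l := by
  induction h with
  | @pair a b hab hM =>
      intro v hv
      rcases List.mem_pair.1 hv with rfl | rfl
      · exact ⟨b, hM, by simp⟩
      · exact ⟨a, hsym _ _ hM, by simp⟩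
  | @cons a b c' rest hab hM hPZ h ih =>
      intro v hv
      rcases List.mem_cons.1 hv with rfl | hv
      · exact ⟨b, hM, by simp⟩
      rcases List.mem_cons.1 hv with rfl | hv
      · exact ⟨a, hsym _ _ hM, by simp⟩
      · obtain ⟨u, hu1, hu2⟩ := ih v hv
        exact ⟨u, hu1, by simp [List.mem_cons.1 hu2]⟩

/-- interior vertices of a trail have their `PZ`-partner in the trail,
and that partner is neither the head nor the last element. -/
lemma twf_IN {l : List V} (h : TWf c M l) (hNd : l.Nodup) :
    ∀ v ∈ l, l.head? ≠ some v → l.getLast? ≠ some v →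
      ∃ u, c.PZ v = some u ∧ u ∈ l ∧ l.head? ≠ some u ∧ l.getLast? ≠ some u := by
  induction h with
  | @pair a b hab hM =>
      intro v hv h1 h2
      rcases List.mem_pair.1 hv with rfl | rfl
      · exact absurd rfl h1
      · exact absurd rfl h2
  | @cons a b c' rest hab hM hPZ h ih =>
      intro v hv h1 h2
      have hrest_ne : rest ≠ [] := by
        cases h with
        | pair _ _ => simp
        | cons _ _ _ _ => simp
      obtain ⟨ha, hNd1⟩ := List.nodup_cons.1 hNd
      obtain ⟨hb, hNd2⟩ := List.nodup_cons.1 hNd1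
      obtain ⟨hc, hNd3⟩ := List.nodup_cons.1 hNd2
      have hlast_eq : (a :: b :: c' :: rest).getLast? = (c' :: rest).getLast? := by
        rw [List.getLast?_cons_cons, List.getLast?_cons_cons]
      obtain ⟨z, hz⟩ : ∃ z, (c' :: rest).getLast? = some z :=
        ⟨_, List.getLast?_eq_getLast_of_ne_nil (by simp)⟩
      have hzrest : z ∈ rest := by
        have : z ∈ rest.getLast? := by rw [← twf_getLast_tail c h]; exact hz
        exact mem_of_getLast?' this
      rcases List.mem_cons.1 hv with rfl | hv
      · exact absurd rfl h1
      rcases List.mem_cons.1 hv with rfl | hv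
      · -- v = b, partner c'
        refine ⟨c', hPZ, by simp, ?_, ?_⟩
        · simp only [List.head?_cons, Ne, Option.some.injEq]
          intro hac; exact ha (by rw [hac]; simp)
        · rw [hlast_eq, hz]
          simp only [Ne, Option.some.injEq]
          intro hcz; exact hc (hcz ▸ hzrest)
      rcases List.mem_cons.1 hv with rfl | hv
      · -- v = c', partner b
        have hPZ' : c.PZ v = some b := (c.hPZm b v hPZ).2
        refine ⟨b, hPZ', by simp, ?_, ?_⟩
        · simp only [List.head?_cons, Ne, Option.some.injEq]
          intro hab'; exact ha (by rw [hab']; simp)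
        · rw [hlast_eq, hz]
          simp only [Ne, Option.some.injEq]
          intro hbz
          exact hb (List.mem_cons_of_mem _ (hbz ▸ hzrest))
      · -- v ∈ rest
        have hvne : v ≠ c' := fun hvc => hc (hvc ▸ hv)
        have h1' : (c' :: rest).head? ≠ some v := by
          simp only [List.head?_cons, Ne, Option.some.injEq]
          exact fun hh => hvne hh.symm
        have h2' : (c' :: rest).getLast? ≠ some v := by
          rw [← hlast_eq]; exact h2
        obtain ⟨u, hu1, hu2, hu3, hu4⟩ := ih hNd2 v (by simp [hv]) h1' h2'
        refine ⟨u, hu1, by simp [List.mem_cons.1 hu2], ?_, ?_⟩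
        · simp only [List.head?_cons, Ne, Option.some.injEq]
          intro hau
          exact ha (by rw [hau]; exact List.mem_cons_of_mem _ hu2)
        · rw [hlast_eq]; exact hu4

end Ctx
namespace Ctx

variable {V : Type*} [Fintype V] (c : Ctx V) {M : V → Option V}

/-- the `PZ`-partner of a vertex outside the trail can only be the
head or the last element of the trail. -/
lemma twf_pz_endpoints {l : List V} (h : TWf c M l) (hNd : l.Nodup)
    {v u : V} (hv : v ∉ l) (hPZ : c.PZ v = some u) (hu : u ∈ l) :
    l.head? = some u ∨ l.getLast? = some u := by
  by_contra hcon
  push_neg at hcon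
  obtain ⟨u', hu1, hu2, _, _⟩ := twf_IN c h hNd u hu hcon.1 hcon.2
  have : u' = v := by
    have := (c.hPZm v u hPZ).2
    rw [this] at hu1; exact (Option.some.inj hu1).symm
  exact hv (this ▸ hu2)

lemma twf_append {l : List V} (h : TWf c M l) {z w b' : V}
    (hz : l.getLast? = some z) (hw : c.PZ z = some w)
    (hA : Arel V c.R c.PZ c.V' w b') (hM : M w = some b') :
    TWf c M (l ++ [w, b']) := by
  induction h with
  | @pair a b hab hMab =>
      have : z = b := by simpa using hz.symm
      subst this
      exact TWf.cons hab hMab hw (TWf.pair hA hM)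
  | @cons a b c' rest hab hMab hPZ h ih =>
      have hz' : (c' :: rest).getLast? = some z := by
        rw [← hz, List.getLast?_cons_cons, List.getLast?_cons_cons]
      exact TWf.cons hab hMab hPZ (ih hz')

lemma twf_altlist_term {l : List V} (h : TWf c M l) {z w : V}
    (hz : l.getLast? = some z) (hw : c.PZ z = some w) :
    AltList (Arel V c.R c.PZ c.V') c.PZ false (l ++ [w]) := by
  induction h with
  | @pair a b hab hMab =>
      have : z = b := by simpa using hz.symm
      subst this
      exact ⟨hab, hw, trivial⟩
  | @cons a b c' rest hab hMab hPZ h ih =>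
      have hz' : (c' :: rest).getLast? = some z := by
        rw [← hz, List.getLast?_cons_cons, List.getLast?_cons_cons]
      exact ⟨hab, hPZ, ih hz'⟩

lemma twf_shape {l : List V} (h : TWf c M l) : ∃ x y t, l = x :: y :: t := by
  cases h with
  | @pair a b _ _ => exact ⟨a, b, [], rfl⟩
  | @cons a b c' rest _ _ _ _ => exact ⟨a, b, _, rfl⟩

lemma twf_get_M {l : List V} (h : TWf c M l) :
    ∀ i, (h2 : 2 * i + 1 < l.length) →
      M (l[2 * i]'(by omega)) = some (l[2 * i + 1]'h2) := by
  induction h with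
  | @pair a b hab hM =>
      intro i h2
      simp only [List.length_cons, List.length_nil] at h2
      match i with
      | 0 => simpa using hM
      | j + 1 => omega
  | @cons a b c' rest hab hM hPZ h ih =>
      intro i h2
      match i with
      | 0 => simpa using hM
      | j + 1 =>
          have hlen : 2 * j + 1 < (c' :: rest).length := by
            simp at h2 ⊢; omega
          have := ih j hlen
          have e1 : 2 * (j + 1) = (2 * j) + 2 := by omega
          have e2 : 2 * (j + 1) + 1 = (2 * j + 1) + 2 := by omega
          simp only [e1, e2, List.getElem_cons_succ]
          exact this

lemma twf_get_PZ {l : List V} (h : TWf c M l) :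
    ∀ i, (h2 : 2 * i + 2 < l.length) →
      c.PZ (l[2 * i + 1]'(by omega)) = some (l[2 * i + 2]'h2) := by
  induction h with
  | @pair a b hab hM =>
      intro i h2
      simp only [List.length_cons, List.length_nil] at h2
      omega
  | @cons a b c' rest hab hM hPZ h ih =>
      intro i h2
      match i with
      | 0 => simpa using hPZ
      | j + 1 =>
          have hlen : 2 * j + 2 < (c' :: rest).length := by
            simp at h2 ⊢; omega
          have := ih j hlen
          have e1 : 2 * (j + 1) + 1 = (2 * j + 1) + 2 := by omega
          have e2 : 2 * (j + 1) + 2 = (2 * j + 2) + 2 := by omega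
          simp only [e1, e2, List.getElem_cons_succ]
          exact this

end Ctx
namespace Ctx

variable {V : Type*} [Fintype V] (c : Ctx V) {M : V → Option V}

lemma nonmatch_symm {u v : V} (h : NonMatchEdge c.R c.PZ u v) :
    NonMatchEdge c.R c.PZ v u := by
  obtain ⟨hadj, hne, hv⟩ := h
  refine ⟨hadj.symm, ?_, hv.symm⟩
  intro h2
  exact hne ((c.hPZm v u h2).2)

lemma twf_head_edge {l : List V} {x y : V} {t : List V} (h : TWf c M l)
    (hl : l = x :: y :: t) : Arel V c.R c.PZ c.V' x y ∧ M x = some y := by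
  subst hl
  cases h with
  | pair hab hM => exact ⟨hab, hM⟩
  | cons hab hM _ _ => exact ⟨hab, hM⟩

lemma twf_M1A (hsym : ∀ u v, M u = some v → M v = some u) {l : List V}
    (h : TWf c M l) : ∀ v ∈ l, ∃ u, M v = some u ∧ u ∈ l ∧
      NonMatchEdge c.R c.PZ v u := by
  induction h with
  | @pair a b hab hM =>
      intro v hv
      rcases List.mem_pair.1 hv with rfl | rfl
      · exact ⟨b, hM, by simp, hab.2.2⟩
      · exact ⟨a, hsym _ _ hM, by simp, c.nonmatch_symm hab.2.2⟩
  | @cons a b c' rest hab hM hPZ h ih =>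
      intro v hv
      rcases List.mem_cons.1 hv with rfl | hv
      · exact ⟨b, hM, by simp, hab.2.2⟩
      rcases List.mem_cons.1 hv with rfl | hv
      · exact ⟨a, hsym _ _ hM, by simp, c.nonmatch_symm hab.2.2⟩
      · obtain ⟨u, hu1, hu2, hu3⟩ := ih v hv
        exact ⟨u, hu1, by simp [List.mem_cons.1 hu2], hu3⟩

/-- toggled matching: on `s` use `M`, kick out `ex`, drop outside vertices
whose `PZ`-partner is inside, and use `PZ` elsewhere. -/
noncomputable def tog (M : V → Option V) (s ex : Set V) : V → Option V :=
  fun v => if v ∈ ex then none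
    else if v ∈ s then M v
    else if ∃ u, c.PZ v = some u ∧ (u ∈ s ∨ u ∈ ex) then none
    else c.PZ v

lemma tog_matching {s ex : Set V} (hM : IsMatching c.R M)
    (hl : ∀ v ∈ s, v ∈ c.V')
    (hMcl : ∀ v ∈ s, ∃ u, M v = some u ∧ u ∈ s ∧ u ∉ ex)
    (hexs : ∀ v ∈ ex, v ∉ s) :
    IsMatchingOn c.R c.V' (c.tog M s ex) := by
  constructor
  · intro u v huv
    unfold tog at huv
    split_ifs at huv with h1 h2 h3
    · -- u ∈ s
      obtain ⟨u', hu1, hu2, hu3⟩ := hMcl u h2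
      rw [huv] at hu1
      cases hu1
      refine ⟨(hM u v huv).1, ?_⟩
      unfold tog
      rw [if_neg hu3, if_pos hu2]
      exact (hM u v huv).2
    · -- PZ edge
      have hsym := (c.hPZm u v huv).2
      refine ⟨(c.hPZm u v huv).1, ?_⟩
      have hvno : v ∉ s ∧ v ∉ ex := by
        constructor <;> intro hv
        · exact h3 ⟨v, huv, Or.inl hv⟩
        · exact h3 ⟨v, huv, Or.inr hv⟩
      unfold tog
      rw [if_neg hvno.2, if_neg hvno.1, if_neg]
      · exact hsym
      · rintro ⟨u', hu1, hu2⟩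
        rw [hsym] at hu1
        cases hu1
        rcases hu2 with h | h
        · exact h2 h
        · exact h1 h
  · intro u v huv
    unfold tog at huv
    split_ifs at huv with h1 h2 h3
    · obtain ⟨u', hu1, hu2, _⟩ := hMcl u h2
      rw [huv] at hu1
      cases hu1
      exact ⟨hl u h2, hl v hu2⟩
    · exact ⟨(c.hPZV' u v huv).1, (c.hPZV' u v huv).2⟩

lemma sc_plus {A : V → Option V} {v u : V} (hA : A v = some u)
    (hadj : c.R.G.Adj v u) (hne : c.PZ v ≠ some u)
    (hvote : VotePlus c.R c.PZ v u) : sc c.R A c.PZ v = 1 := by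
  rcases hp : c.PZ v with _ | p
  · exact sc_some_none hA hp
  · have hpu : u ≠ p := fun h => hne (h ▸ hp)
    have hadjp : c.R.G.Adj v p := (c.hPZm v p hp).1
    rw [sc_some_some hA hp hpu hadj hadjp, if_pos (hvote p hp)]

lemma sc_pair_ge {A : V → Option V} {u v : V} (hA : A u = some v)
    (hA' : A v = some u) (hnm : NonMatchEdge c.R c.PZ u v) :
    0 ≤ sc c.R A c.PZ u + sc c.R A c.PZ v := by
  obtain ⟨hadj, hne, hv⟩ := hnm
  have hne' : c.PZ v ≠ some u := fun h2 => hne (c.hPZm v u h2).2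
  rcases hv with h | h
  · have h1 := c.sc_plus hA hadj hne h
    have h2 := (sc_bounds (R := c.R) A c.PZ v).2
    omega
  · have h1 := c.sc_plus hA' hadj.symm hne' h
    have h2 := (sc_bounds (R := c.R) A c.PZ u).2
    omega

end Ctx
namespace Ctx

variable {V : Type*} [Fintype V] (c : Ctx V) {M : V → Option V}

/-- an alternating trail seeded at a blocking edge cannot end at a
`PZ`-unexposed vertex, nor close up into a cycle: both contradict
the popularity of `PZ` on `V'`. -/
lemma toggle_contra {l : List V} {x y : V} {t : List V} {z : V}
    (hM : IsMatching c.R M)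
    (h : TWf c M l) (hNd : l.Nodup) (hl : l = x :: y :: t)
    (hB : Blocks c.R c.PZ x y)
    (hz : l.getLast? = some z)
    (hend : c.PZ z = none ∨ c.PZ z = some x) : False := by
  classical
  have hsym : ∀ u v, M u = some v → M v = some u := fun u v h' => (hM u v h').2
  set s : Set V := {v | v ∈ l} with hs
  set N := c.tog M s ∅ with hNdef
  have hxy : x ≠ y := hB.1.ne
  have hMxy : M x = some y := (c.twf_head_edge h hl).2
  have hxl : x ∈ l := by rw [hl]; simp
  have hyl : y ∈ l := by rw [hl]; simp
  have hNm : IsMatchingOn c.R c.V' N := by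
    refine c.tog_matching hM (c.twf_sub h) ?_ (by simp)
    intro v hv
    obtain ⟨u, hu1, hu2, _⟩ := c.twf_M1A hsym h v hv
    exact ⟨u, hu1, hu2, by simp⟩
  have hub := c.hpop_sum hNm
  set f := sc c.R N c.PZ with hf
  -- the set of dropped outside vertices
  set dropF : Finset V :=
    Finset.univ.filter (fun v => v ∉ l ∧ ∃ u, c.PZ v = some u ∧ u ∈ l) with hdrop
  have hNonl : ∀ v ∈ l, N v = M v := by
    intro v hv
    show c.tog M s ∅ v = M v
    unfold tog
    rw [if_neg (by simp), if_pos (by exact hv)]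
  have hdropuniq : ∀ v ∈ dropF, c.PZ x = some v := by
    intro v hv
    rw [hdrop, Finset.mem_filter] at hv
    obtain ⟨hvl, u, hu1, hu2⟩ := hv.2
    have := c.twf_pz_endpoints h hNd hvl hu1 hu2
    rcases this with h1 | h1
    · have hux : u = x := by rw [hl] at h1; simpa using h1.symm
      subst hux
      exact (c.hPZm v u hu1).2
    · have huz : u = z := by rw [h1] at hz; exact Option.some.inj hz
      subst huz
      have hzv : c.PZ u = some v := (c.hPZm v u hu1).2
      rcases hend with he | he
      · rw [he] at hzv; cases hzv
      · rw [he] at hzv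
        exact absurd ((Option.some.inj hzv) ▸ hxl) hvl
  have hdropcard : dropF.card ≤ 1 := by
    refine Finset.card_le_one.2 ?_
    intro a ha b hb
    have h1 := hdropuniq a ha
    have h2 := hdropuniq b hb
    rw [h1] at h2; exact (Option.some.inj h2)
  have hdropval : ∀ v ∈ dropF, f v = -1 := by
    intro v hv
    rw [hdrop, Finset.mem_filter] at hv
    obtain ⟨-, hvl, u, hu1, hu2⟩ := hv
    have : N v = none := by
      show c.tog M s ∅ v = none
      unfold tog
      rw [if_neg (by simp), if_neg (by exact hvl), if_pos ⟨u, hu1, Or.inl hu2⟩]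
    exact sc_none_some this hu1
  have hvanish : ∀ v, v ∉ l.toFinset ∪ dropF → f v = 0 := by
    intro v hv
    rw [Finset.mem_union, List.mem_toFinset] at hv
    push_neg at hv
    have hvl : v ∉ l := hv.1
    have hnd : ¬ (v ∉ l ∧ ∃ u, c.PZ v = some u ∧ u ∈ l) := by
      intro hcon
      exact hv.2 (by rw [hdrop, Finset.mem_filter]; exact ⟨Finset.mem_univ v, hcon⟩)
    have : N v = c.PZ v := by
      show c.tog M s ∅ v = c.PZ v
      unfold tog
      rw [if_neg (by simp), if_neg (by exact hvl), if_neg]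
      rintro ⟨u, hu1, hu2 | hu2⟩
      · exact hnd ⟨hvl, u, hu1, hu2⟩
      · simp at hu2
    exact sc_eq this
  -- lower bound on the sum over the trail
  have hfx : f x = 1 := by
    refine c.sc_plus (by rw [hNonl x hxl]; exact hMxy) hB.1 hB.2.1 hB.2.2.1
  have hfy : f y = 1 := by
    have hMyx : M y = some x := hsym _ _ hMxy
    have hPZyx : c.PZ y ≠ some x := fun h2 => hB.2.1 (c.hPZm y x h2).2
    exact c.sc_plus (by rw [hNonl y hyl]; exact hMyx) hB.1.symm hPZyx hB.2.2.2
  have hpairs : 0 ≤ ∑ v ∈ l.toFinset \ {x, y}, f v := by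
    refine sum_ge_of_pairs _ M hsym ?_ f ?_
    · intro v hv
      rw [Finset.mem_sdiff, List.mem_toFinset] at hv
      obtain ⟨u, hu1, hu2, hu3⟩ := c.twf_M1A hsym h v hv.1
      refine ⟨u, hu1, ?_⟩
      rw [Finset.mem_sdiff, List.mem_toFinset]
      refine ⟨hu2, ?_⟩
      simp only [Finset.mem_insert, Finset.mem_singleton]
      rintro (rfl | rfl)
      · have h5 := hsym _ _ hu1
        rw [hMxy] at h5
        have h6 : v = y := (Option.some.inj h5).symm
        exact (by simpa [h6] using hv.2 : False)
      · have h5 := hsym _ _ hu1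
        rw [hsym _ _ hMxy] at h5
        have h6 : v = x := (Option.some.inj h5).symm
        exact (by simpa [h6] using hv.2 : False)
    · intro u v hu hv huv
      rw [Finset.mem_sdiff, List.mem_toFinset] at hu hv
      obtain ⟨u', hu1, hu2, hu3⟩ := c.twf_M1A hsym h u hu.1
      have heq : u' = v := by rw [huv] at hu1; exact (Option.some.inj hu1).symm
      rw [heq] at hu3
      exact c.sc_pair_ge (by rw [hNonl u hu.1]; exact huv)
        (by rw [hNonl v hv.1]; exact hsym _ _ huv) hu3
  have hsubxy : ({x, y} : Finset V) ⊆ l.toFinset := by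
    intro a ha
    rw [List.mem_toFinset]
    rcases Finset.mem_insert.1 ha with rfl | ha
    · exact hxl
    · rw [Finset.mem_singleton] at ha; subst ha; exact hyl
  have hsum_l : 2 ≤ ∑ v ∈ l.toFinset, f v := by
    have hsplit := Finset.sum_sdiff (f := f) hsubxy
    have hxy_sum : ∑ v ∈ ({x, y} : Finset V), f v = 2 := by
      rw [Finset.sum_pair hxy, hfx, hfy]
      norm_num
    omega
  have hdisj : Disjoint l.toFinset dropF := by
    rw [Finset.disjoint_left]
    intro a ha hb
    rw [hdrop, Finset.mem_filter] at hb
    exact hb.2.1 (List.mem_toFinset.1 ha)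
  have hdropsum : -1 ≤ ∑ v ∈ dropF, f v := by
    have : ∑ v ∈ dropF, f v = -dropF.card := by
      rw [Finset.sum_congr rfl hdropval]
      simp
    rw [this]
    omega
  have htot : ∑ v, f v = ∑ v ∈ l.toFinset ∪ dropF, f v := by
    refine (Finset.sum_subset (Finset.subset_univ _) ?_).symm
    intro v _ hv
    exact hvanish v hv
  rw [htot, Finset.sum_union hdisj] at hub
  omega

end Ctx
namespace Ctx

variable {V : Type*} [Fintype V] {c : Ctx V} {M : V → Option V}

/-- a maximal alternating trail grown from the blocking edge `(x,y)`. -/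
structure EndTrail (c : Ctx V) (M : V → Option V) (x y : V) where
  l : List V
  w : V
  z : V
  hWf : TWf c M l
  hNd : l.Nodup
  hshape : ∃ t, l = x :: y :: t
  hz : l.getLast? = some z
  hPZzw : c.PZ z = some w
  hwl : w ∉ l
  hwV : w ∈ c.V'
  hstop : M w = none ∨
    ∃ b, M w = some b ∧ ¬ VotePlus c.R c.P w b ∧ ¬ VotePlus c.R c.P b w

variable (c)

lemma trail_step (hM : IsMatching c.R M) {l : List V} {x y : V} {t : List V}
    (h : TWf c M l) (hNd : l.Nodup) (hl : l = x :: y :: t)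
    (hB : Blocks c.R c.PZ x y) :
    (∃ (w z : V), l.getLast? = some z ∧ c.PZ z = some w ∧ w ∉ l ∧ w ∈ c.V' ∧
      (M w = none ∨
        ∃ b, M w = some b ∧ ¬ VotePlus c.R c.P w b ∧ ¬ VotePlus c.R c.P b w)) ∨
    (∃ (w b : V), TWf c M (l ++ [w, b]) ∧ (l ++ [w, b]).Nodup ∧
      l ++ [w, b] = x :: y :: (t ++ [w, b])) := by
  have hsym : ∀ u v, M u = some v → M v = some u := fun u v h' => (hM u v h').2
  obtain ⟨z, hz⟩ : ∃ z, l.getLast? = some z := by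
    rw [hl]; exact ⟨_, List.getLast?_eq_getLast_of_ne_nil (by simp)⟩
  have hzl : z ∈ l := mem_of_getLast?' hz
  rcases hPZz : c.PZ z with _ | w
  · exact absurd (c.toggle_contra hM h hNd hl hB hz (Or.inl hPZz)) id
  have hPZwz : c.PZ w = some z := (c.hPZm z w hPZz).2
  have hwl : w ∉ l := by
    intro hwmem
    by_cases hwz : w = z
    · exact (c.hPZm z w hPZz).1.ne hwz.symm
    by_cases hwx : w = x
    · subst hwx
      exact c.toggle_contra hM h hNd hl hB hz (Or.inr hPZz)
    · have hhead : l.head? ≠ some w := by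
        rw [hl]; simp only [List.head?_cons, Ne, Option.some.injEq]
        exact fun hh => hwx hh.symm
      have hlast : l.getLast? ≠ some w := by
        rw [hz]; simp only [Ne, Option.some.injEq]
        exact fun hh => hwz hh.symm
      obtain ⟨u, hu1, hu2, hu3, hu4⟩ := c.twf_IN h hNd w hwmem hhead hlast
      have huz : u = z := by rw [hPZwz] at hu1; exact (Option.some.inj hu1).symm
      exact hu4 (huz ▸ hz)
  have hwV : w ∈ c.V' := (c.hPZV' z w hPZz).2
  rcases hMw : M w with _ | b
  · exact Or.inl ⟨w, z, hz, hPZz, hwl, hwV, Or.inl hMw⟩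
  have hadjwb : c.R.G.Adj w b := (hM w b hMw).1
  have hbl : b ∉ l := by
    intro hbmem
    obtain ⟨u, hu1, hu2, _⟩ := c.twf_M1A hsym h b hbmem
    have : u = w := by rw [hsym w b hMw] at hu1; exact (Option.some.inj hu1).symm
    exact hwl (this ▸ hu2)
  have hbz : b ≠ z := fun hbz => hbl (hbz ▸ hzl)
  have hPZwb : c.PZ w ≠ some b := by
    rw [hPZwz]
    exact fun hh => hbz (Option.some.inj hh).symm
  by_cases hbV : b ∈ c.V'
  · by_cases hnm : VotePlus c.R c.PZ w b ∨ VotePlus c.R c.PZ b w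
    · -- continue the trail
      refine Or.inr ⟨w, b, ?_, ?_, by rw [hl]; simp⟩
      · exact c.twf_append h hz hPZz ⟨hwV, hbV, hadjwb, hPZwb, hnm⟩ hMw
      · rw [List.nodup_append]
        refine ⟨hNd, by simp [hadjwb.ne], ?_⟩
        intro a ha a' hab heq
        subst heq
        rcases List.mem_pair.1 hab with rfl | rfl
        · exact hwl ha
        · exact hbl ha
    · -- both endpoints vote minus w.r.t. PZ, and both are in V'
      push_neg at hnm
      refine Or.inl ⟨w, z, hz, hPZz, hwl, hwV, Or.inr ⟨b, hMw, ?_, ?_⟩⟩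
      · rw [c.votes_eq hwV]; exact hnm.1
      · rw [c.votes_eq hbV]; exact hnm.2
  · -- the trail would leave V': the cut hypothesis applies
    have hxV : x ∈ c.V' := (c.twf_head_edge h hl).1.1
    have hyV : y ∈ c.V' := (c.twf_head_edge h hl).1.2.1
    have halt : AltList (Arel V c.R c.PZ c.V') c.PZ false (l ++ [w]) :=
      c.twf_altlist_term h hz hPZz
    have hnd' : (l ++ [w]).Nodup := by
      rw [List.nodup_append]
      refine ⟨hNd, by simp, ?_⟩
      intro a ha a' hab heq
      subst heq
      rw [List.mem_singleton] at hab
      subst hab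
      exact hwl ha
    have hodd : Odd (l ++ [w]).length := by
      obtain ⟨r, hr⟩ := c.twf_even h
      rw [List.length_append, List.length_singleton, hr]
      exact ⟨r, by omega⟩
    have hlast' : (l ++ [w]).getLast? = some w := by
      rw [List.getLast?_append_of_ne_nil l (by simp)]
      rfl
    have := c.hcut (l ++ [w]) x y (t ++ [w]) w (by rw [hl]; simp) hxV hyV hB
      halt hnd' hodd hlast' b hbV hadjwb
    exact Or.inl ⟨w, z, hz, hPZz, hwl, hwV, Or.inr ⟨b, hMw, this.1, this.2⟩⟩

lemma trail_exists (hM : IsMatching c.R M) {x y : V}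
    (hA : Arel V c.R c.PZ c.V' x y) (hMxy : M x = some y)
    (hB : Blocks c.R c.PZ x y) : Nonempty (EndTrail c M x y) := by
  suffices H : ∀ (n : ℕ) (l : List V) (t : List V), TWf c M l → l.Nodup →
      l = x :: y :: t → Fintype.card V ≤ l.length + n →
      Nonempty (EndTrail c M x y) by
    refine H (Fintype.card V) [x, y] [] (TWf.pair hA hMxy) ?_ rfl (by simp)
    simp [hB.1.ne]
  intro n
  induction n with
  | zero =>
      intro l t h hNd hl hcard
      rcases c.trail_step hM h hNd hl hB with
        ⟨w, z, hz, hPZz, hwl, hwV, hstop⟩ | ⟨w, b, h', hNd', hl'⟩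
      · exact ⟨⟨l, w, z, h, hNd, ⟨t, hl⟩, hz, hPZz, hwl, hwV, hstop⟩⟩
      · exfalso
        have hle : (l ++ [w, b]).length ≤ Fintype.card V :=
          List.Nodup.length_le_card hNd'
        rw [List.length_append] at hle
        simp at hle
        omega
  | succ n ih =>
      intro l t h hNd hl hcard
      rcases c.trail_step hM h hNd hl hB with
        ⟨w, z, hz, hPZz, hwl, hwV, hstop⟩ | ⟨w, b, h', hNd', hl'⟩
      · exact ⟨⟨l, w, z, h, hNd, ⟨t, hl⟩, hz, hPZz, hwl, hwV, hstop⟩⟩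
      · refine ih (l ++ [w, b]) (t ++ [w, b]) h' hNd' hl' ?_
        rw [List.length_append]
        simp
        omega

end Ctx
namespace Ctx

variable {V : Type*} [Fintype V] (c : Ctx V) {M : V → Option V}

lemma w_not_in_other {x y : V} (hM : IsMatching c.R M)
    (T₂ : EndTrail c M x y) {l : List V} (h : TWf c M l) :
    T₂.w ∉ l := by
  intro hmem
  have hsym : ∀ u v, M u = some v → M v = some u := fun u v h' => (hM u v h').2
  obtain ⟨u, hu1, hu2, hu3⟩ := c.twf_M1A hsym h T₂.w hmem
  rcases T₂.hstop with hst | ⟨b, hb1, hb2, hb3⟩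
  · rw [hst] at hu1; cases hu1
  · have hbu : b = u := by rw [hb1] at hu1; exact Option.some.inj hu1
    rw [hbu] at hb2 hb3
    have huV : u ∈ c.V' := c.twf_sub h u hu2
    rcases hu3.2.2 with hv | hv
    · exact hb2 ((c.votes_eq T₂.hwV u).2 hv)
    · exact hb3 ((c.votes_eq huV T₂.w).2 hv)

lemma int_key {x y : V} (hM : IsMatching c.R M) (hMxy : M x = some y)
    {l₁ l₂ : List V} {t₁ t₂ : List V} {zz ww : V}
    (h₁ : TWf c M l₁) (hNd₁ : l₁.Nodup) (ht₁ : l₁ = x :: y :: t₁)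
    (h₂ : TWf c M l₂) (hNd₂ : l₂.Nodup) (ht₂ : l₂ = y :: x :: t₂)
    (hz₂ : l₂.getLast? = some zz) (hzw₂ : c.PZ zz = some ww) (hw₂ : ww ∉ l₁) :
    ∀ v, v ∈ l₁ → v ∈ l₂ → v = x ∨ v = y := by
  have hsym : ∀ u v, M u = some v → M v = some u := fun u v h' => (hM u v h').2
  subst ht₁ ht₂
  have KEY : ∀ i (hi : i < (x :: y :: t₁).length), (x :: y :: t₁)[i] ∈ y :: x :: t₂ →
      (x :: y :: t₁)[i] = x ∨ (x :: y :: t₁)[i] = y := by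
    intro i
    induction i using Nat.strong_induction_on with
    | _ i IH =>
      intro hi hmem
      match i with
      | 0 => exact Or.inl rfl
      | 1 => exact Or.inr rfl
      | (k + 2) =>
        have hne_x : (x :: y :: t₁)[k+2] ≠ x := by
          intro hvx
          have h0 : (0:ℕ) < (x :: y :: t₁).length := by simp
          have : (x :: y :: t₁)[k+2] = (x :: y :: t₁)[0] := hvx
          have := (hNd₁.getElem_inj_iff).1 this
          omega
        have hne_y : (x :: y :: t₁)[k+2] ≠ y := by
          intro hvy
          have h1 : (1:ℕ) < (x :: y :: t₁).length := by simp
          have : (x :: y :: t₁)[k+2] = (x :: y :: t₁)[1] := hvy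
          have := (hNd₁.getElem_inj_iff).1 this
          omega
        have hip : k + 1 < (x :: y :: t₁).length := by omega
        rcases Nat.even_or_odd (k + 2) with he | ho
        · -- even position: PZ-partner sits at position k+1
          obtain ⟨j, hj⟩ : ∃ j, k + 2 = 2 * j + 2 := by
            obtain ⟨r, hr⟩ := he; exact ⟨r - 1, by omega⟩
          have hPZpv : c.PZ ((x :: y :: t₁)[k+1]) = some ((x :: y :: t₁)[k+2]) := by
            have h5 := c.twf_get_PZ h₁ j (by omega)
            have e1 : 2 * j + 1 = k + 1 := by omega
            have e2 : 2 * j + 2 = k + 2 := by omega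
            simp_rw [e1, e2] at h5
            exact h5
          have hPZvp : c.PZ ((x :: y :: t₁)[k+2]) = some ((x :: y :: t₁)[k+1]) :=
            (c.hPZm _ _ hPZpv).2
          by_cases hlast : (y :: x :: t₂).getLast? = some ((x :: y :: t₁)[k+2])
          · -- the vertex is the end of the second trail
            have hvz : (x :: y :: t₁)[k+2] = zz := by
              rw [hz₂] at hlast; exact (Option.some.inj hlast).symm
            have hpw : (x :: y :: t₁)[k+1] = ww := by
              rw [hvz] at hPZvp
              rw [hzw₂] at hPZvp
              exact (Option.some.inj hPZvp).symm
            exact absurd (hpw ▸ (List.getElem_mem hip)) hw₂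
          · have hhead : (y :: x :: t₂).head? ≠ some ((x :: y :: t₁)[k+2]) := by
              simp only [List.head?_cons, Ne, Option.some.injEq]
              exact fun hh => hne_y hh.symm
            obtain ⟨u, hu1, hu2, hu3, _⟩ :=
              c.twf_IN h₂ hNd₂ _ hmem hhead hlast
            have hup : u = (x :: y :: t₁)[k+1] := by
              rw [hPZvp] at hu1; exact (Option.some.inj hu1).symm
            rw [hup] at hu2 hu3
            have hres := IH (k + 1) (by omega) hip hu2
            rcases hres with hpx | hpy
            · -- the partner equals x, forcing position 0 : contradiction
              have : (x :: y :: t₁)[k+1] = (x :: y :: t₁)[0] := hpx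
              have := (hNd₁.getElem_inj_iff).1 this
              omega
            · exact absurd (by simp [hpy] : (y :: x :: t₂).head? =
                some ((x :: y :: t₁)[k+1])) hu3
        · -- odd position: M-partner sits at position k+1
          obtain ⟨j, hj⟩ : ∃ j, k + 2 = 2 * j + 1 := by
            obtain ⟨r, hr⟩ := ho; exact ⟨r, by omega⟩
          have hMuv : M ((x :: y :: t₁)[k+1]) = some ((x :: y :: t₁)[k+2]) := by
            have h5 := c.twf_get_M h₁ j (by omega)
            have e1 : 2 * j = k + 1 := by omega
            have e2 : 2 * j + 1 = k + 2 := by omega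
            simp_rw [e2, e1] at h5
            exact h5
          have hMvu : M ((x :: y :: t₁)[k+2]) = some ((x :: y :: t₁)[k+1]) :=
            hsym _ _ hMuv
          obtain ⟨u', hu1, hu2, _⟩ := c.twf_M1A hsym h₂ _ hmem
          have huu : u' = (x :: y :: t₁)[k+1] := by
            rw [hMvu] at hu1; exact (Option.some.inj hu1).symm
          rw [huu] at hu2
          have hres := IH (k + 1) (by omega) hip hu2
          rcases hres with hux | huy
          · rw [hux, hMxy] at hMuv
            exact absurd (Option.some.inj hMuv).symm hne_y
          · rw [huy, hsym _ _ hMxy] at hMuv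
            exact absurd (Option.some.inj hMuv).symm hne_x
  intro v hv1 hv2
  obtain ⟨i, hi, rfl⟩ := List.mem_iff_getElem.1 hv1
  exact KEY i hi hv2

lemma int_main {x y : V} (hM : IsMatching c.R M) (hMxy : M x = some y)
    (T₁ : EndTrail c M x y) (T₂ : EndTrail c M y x) :
    ∀ v, v ∈ T₁.l → v ∈ T₂.l → v = x ∨ v = y := by
  obtain ⟨t₁, ht₁⟩ := T₁.hshape
  obtain ⟨t₂, ht₂⟩ := T₂.hshape
  exact c.int_key hM hMxy T₁.hWf T₁.hNd ht₁ T₂.hWf T₂.hNd ht₂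
    T₂.hz T₂.hPZzw (c.w_not_in_other hM T₂ T₁.hWf)

end Ctx
namespace Ctx

variable {V : Type*} [Fintype V] (c : Ctx V) {M : V → Option V}

lemma sc_congr {R : Roommates V} {A A' B B' : V → Option V} {v : V}
    (hA : A v = A' v) (hB : B v = B' v) : sc R A B v = sc R A' B' v := by
  unfold sc Prefers
  rw [hA, hB]

lemma getLast_ne_head {a b z : V} {t : List V} (hNd : (a :: b :: t).Nodup)
    (hz : (a :: b :: t).getLast? = some z) : z ≠ a := by
  intro hza
  rw [List.getLast?_cons_cons] at hz
  have hmem : z ∈ b :: t := mem_of_getLast?' hz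
  exact (List.nodup_cons.1 hNd).1 (hza ▸ hmem)

/-- the union of the two trails together with the two end vertices is
closed under `PZ`. -/
lemma pz_closure {x y : V} (hM : IsMatching c.R M) (hxy : x ≠ y)
    (T₁ : EndTrail c M x y) (T₂ : EndTrail c M y x) :
    ∀ v, (v ∈ T₁.l ∨ v ∈ T₂.l ∨ v = T₁.w ∨ v = T₂.w) → ∀ u, c.PZ v = some u →
      (u ∈ T₁.l ∨ u ∈ T₂.l ∨ u = T₁.w ∨ u = T₂.w) := by
  obtain ⟨t₁, ht₁⟩ := T₁.hshape
  obtain ⟨t₂, ht₂⟩ := T₂.hshape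
  have hone : ∀ (a b : V), a ≠ b → ∀ (T : EndTrail c M a b) (T' : EndTrail c M b a)
      (ta tb : List V), T.l = a :: b :: ta → T'.l = b :: a :: tb →
      ∀ v ∈ T.l, ∀ u, c.PZ v = some u →
      (u ∈ T.l ∨ u ∈ T'.l ∨ u = T.w ∨ u = T'.w) := by
    intro a b hab T T' ta tb hTl hTl' v hv u hu
    by_cases hu1 : u ∈ T.l
    · exact Or.inl hu1
    by_cases hu2 : u ∈ T'.l
    · exact Or.inr (Or.inl hu2)
    have hPZuv : c.PZ u = some v := (c.hPZm v u hu).2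
    rcases c.twf_pz_endpoints T.hWf T.hNd hu1 hPZuv hv with hh | hh
    · -- v is the head a of T.l; use the second trail
      have hva : v = a := by
        rw [hTl] at hh; simpa using hh.symm
      have hvT' : v ∈ T'.l := by rw [hTl', hva]; simp
      rcases c.twf_pz_endpoints T'.hWf T'.hNd hu2 hPZuv hvT' with h2 | h2
      · have hvb : v = b := by rw [hTl'] at h2; simpa using h2.symm
        exact absurd (hva.symm.trans hvb) hab
      · -- v is the last of T'.l : then u is T'.w
        have hvz : v = T'.z := by
          rw [T'.hz] at h2; exact (Option.some.inj h2).symm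
        have h3 : c.PZ v = some T'.w := by rw [hvz]; exact T'.hPZzw
        rw [hu] at h3
        exact Or.inr (Or.inr (Or.inr (Option.some.inj h3)))
    · -- v is the last of T.l : then u is T.w
      have hvz : v = T.z := by
        rw [T.hz] at hh; exact (Option.some.inj hh).symm
      have h3 : c.PZ v = some T.w := by rw [hvz]; exact T.hPZzw
      rw [hu] at h3
      exact Or.inr (Or.inr (Or.inl (Option.some.inj h3)))
  rintro v (hv | hv | rfl | rfl) u hu
  · exact hone x y hxy T₁ T₂ t₁ t₂ ht₁ ht₂ v hv u hu
  · rcases hone y x hxy.symm T₂ T₁ t₂ t₁ ht₂ ht₁ v hv u hu with h | h | h | h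
    · exact Or.inr (Or.inl h)
    · exact Or.inl h
    · exact Or.inr (Or.inr (Or.inr h))
    · exact Or.inr (Or.inr (Or.inl h))
  · have : u = T₁.z := by
      have h2 : c.PZ T₁.w = some T₁.z := (c.hPZm T₁.z T₁.w T₁.hPZzw).2
      rw [hu] at h2; exact Option.some.inj h2
    exact Or.inl (this ▸ mem_of_getLast?' T₁.hz)
  · have : u = T₂.z := by
      have h2 : c.PZ T₂.w = some T₂.z := (c.hPZm T₂.z T₂.w T₂.hPZzw).2
      rw [hu] at h2; exact Option.some.inj h2
    exact Or.inr (Or.inl (this ▸ mem_of_getLast?' T₂.hz))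

/-- if no `M`-edge blocks `P`, the election is not lost. -/
lemma no_bad_sum (hM : IsMatching c.R M)
    (hnob : ∀ x y, M x = some y → ¬ Blocks c.R c.P x y) :
    ∑ v, sc c.R M c.P v ≤ 0 := by
  refine sum_le_of_pairs M (fun u v h => (hM u v h).2) _ ?_ ?_
  · intro v hv
    rcases hP : c.P v with _ | u
    · rw [sc_none_none hv hP]
    · rw [sc_none_some hv hP]; omega
  · intro u v huv
    by_cases hPu : c.P u = some v
    · have h1 : sc c.R M c.P u = 0 := sc_eq (by rw [huv, hPu])
      have h2 : sc c.R M c.P v = 0 :=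
        sc_eq (by rw [(hM u v huv).2, (c.hPm u v hPu).2])
      omega
    · have hnb := hnob u v huv
      have hvotes : ¬ (VotePlus c.R c.P u v ∧ VotePlus c.R c.P v u) := by
        intro hc
        exact hnb ⟨(hM u v huv).1, hPu, hc.1, hc.2⟩
      have key : sc c.R M c.P u = -1 ∨ sc c.R M c.P v = -1 := by
        rcases not_and_or.1 hvotes with hnv | hnv
        · left
          unfold VotePlus at hnv
          push_neg at hnv
          obtain ⟨w', hw1, hw2⟩ := hnv
          have hvw : v ≠ w' := by
            intro hvw; exact hPu (hvw ▸ hw1)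
          rw [sc_some_some huv hw1 hvw (hM u v huv).1 (c.hPm u w' hw1).1,
            if_neg (by omega)]
        · right
          unfold VotePlus at hnv
          push_neg at hnv
          obtain ⟨w', hw1, hw2⟩ := hnv
          have hPv : c.P v ≠ some u := fun h2 => hPu (c.hPm v u h2).2
          have huw : u ≠ w' := by
            intro huw; exact hPv (huw ▸ hw1)
          rw [sc_some_some ((hM u v huv).2) hw1 huw (hM u v huv).1.symm
            (c.hPm v w' hw1).1, if_neg (by omega)]
      have b1 := (sc_bounds (R := c.R) M c.P u).1
      have b2 := (sc_bounds (R := c.R) M c.P v).1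
      omega

end Ctx
namespace Ctx

variable {V : Type*} [Fintype V] (c : Ctx V)

lemma main_sum : ∀ (n : ℕ) (M : V → Option V), IsMatching c.R M →
    (Finset.univ.filter
      (fun v => ∃ u, M v = some u ∧ Blocks c.R c.P v u)).card ≤ n →
    ∑ v, sc c.R M c.P v ≤ 0 := by
  intro n
  induction n with
  | zero =>
      intro M hM hcard
      refine c.no_bad_sum hM ?_
      intro x y hxy hB
      have hx : x ∈ Finset.univ.filter
          (fun v => ∃ u, M v = some u ∧ Blocks c.R c.P v u) :=
        Finset.mem_filter.2 ⟨Finset.mem_univ x, y, hxy, hB⟩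
      have := Finset.card_pos.2 ⟨x, hx⟩
      omega
  | succ n ih =>
      intro M hM hcard
      by_cases hbad : ∃ x y, M x = some y ∧ Blocks c.R c.P x y
      swap
      · push_neg at hbad
        exact c.no_bad_sum hM (fun x y h1 h2 => hbad x y h1 h2)
      obtain ⟨x, y, hMxy, hB⟩ := hbad
      have hsym : ∀ u v, M u = some v → M v = some u :=
        fun u v h' => (hM u v h').2
      have hadj : c.R.G.Adj x y := hB.1
      obtain ⟨hxV, hyV⟩ := c.hbadloc x y hadj hB.2.1 hB.2.2.1 hB.2.2.2
      have hPx : c.P x = c.PZ x := c.hPV' x hxV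
      have hPy : c.P y = c.PZ y := c.hPV' y hyV
      have hBZ : Blocks c.R c.PZ x y := by
        refine ⟨hadj, by rw [← hPx]; exact hB.2.1, ?_, ?_⟩
        · rw [← hPx]; exact hB.2.2.1
        · rw [← hPy]; exact hB.2.2.2
      have hBZ' : Blocks c.R c.PZ y x := by
        refine ⟨hadj.symm, ?_, hBZ.2.2.2, hBZ.2.2.1⟩
        intro h2
        exact hBZ.2.1 (c.hPZm y x h2).2
      have hArel : Arel V c.R c.PZ c.V' x y :=
        ⟨hxV, hyV, hadj, hBZ.2.1, Or.inl hBZ.2.2.1⟩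
      have hArel' : Arel V c.R c.PZ c.V' y x :=
        ⟨hyV, hxV, hadj.symm, hBZ'.2.1, Or.inl hBZ.2.2.2⟩
      obtain ⟨T₁⟩ := trail_exists c hM hArel hMxy hBZ
      obtain ⟨T₂⟩ := trail_exists c hM hArel' (hsym x y hMxy) hBZ'
      obtain ⟨t₁, ht₁⟩ := T₁.hshape
      obtain ⟨t₂, ht₂⟩ := T₂.hshape
      have hw1l2 : T₁.w ∉ T₂.l := c.w_not_in_other hM T₁ T₂.hWf
      have hw2l1 : T₂.w ∉ T₁.l := c.w_not_in_other hM T₂ T₁.hWf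
      have hxl1 : x ∈ T₁.l := by rw [ht₁]; simp
      have hyl1 : y ∈ T₁.l := by rw [ht₁]; simp
      have hPZw1 : c.PZ T₁.w = some T₁.z := (c.hPZm T₁.z T₁.w T₁.hPZzw).2
      have hPZw2 : c.PZ T₂.w = some T₂.z := (c.hPZm T₂.z T₂.w T₂.hPZzw).2
      have hz1x : T₁.z ≠ x := getLast_ne_head (ht₁ ▸ T₁.hNd) (ht₁ ▸ T₁.hz)
      have hz2y : T₂.z ≠ y := getLast_ne_head (ht₂ ▸ T₂.hNd) (ht₂ ▸ T₂.hz)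
      have hINT := c.int_main hM hMxy T₁ T₂
      have hz1l : T₁.z ∈ T₁.l := mem_of_getLast?' T₁.hz
      have hz2l : T₂.z ∈ T₂.l := mem_of_getLast?' T₂.hz
      have hww : T₁.w ≠ T₂.w := by
        intro heq
        have h1 : c.PZ T₁.w = some T₂.z := by rw [heq]; exact hPZw2
        have hzz : T₁.z = T₂.z := by
          rw [hPZw1] at h1; exact Option.some.inj h1
        rcases hINT T₁.z hz1l (hzz ▸ hz2l) with hzx | hzy
        · exact hz1x hzx
        · exact hz2y (hzz ▸ hzy)
      set s : Set V := {v | v ∈ T₁.l ∨ v ∈ T₂.l} with hsdef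
      set ex : Set V := {T₁.w, T₂.w} with hexdef
      have hmem_s : ∀ v, v ∈ s ↔ (v ∈ T₁.l ∨ v ∈ T₂.l) := fun v => Iff.rfl
      have hmem_ex : ∀ v, v ∈ ex ↔ (v = T₁.w ∨ v = T₂.w) := fun v => by
        rw [hexdef]; simp [Set.mem_insert_iff]
      have hsV : ∀ v ∈ s, v ∈ c.V' := by
        rintro v (hv | hv)
        · exact c.twf_sub T₁.hWf v hv
        · exact c.twf_sub T₂.hWf v hv
      have hexs : ∀ v ∈ ex, v ∉ s := by
        intro v hv hvs
        rcases (hmem_ex v).1 hv with h1 | h1 <;>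
          rcases (hmem_s v).1 hvs with h2 | h2
        · exact T₁.hwl (h1 ▸ h2)
        · exact hw1l2 (h1 ▸ h2)
        · exact hw2l1 (h1 ▸ h2)
        · exact T₂.hwl (h1 ▸ h2)
      have hMcl : ∀ v ∈ s, ∃ u, M v = some u ∧ u ∈ s ∧ u ∉ ex := by
        rintro v (hv | hv)
        · obtain ⟨u, hu1, hu2, _⟩ := c.twf_M1A hsym T₁.hWf v hv
          exact ⟨u, hu1, Or.inl hu2, fun hu => hexs u hu (Or.inl hu2)⟩
        · obtain ⟨u, hu1, hu2, _⟩ := c.twf_M1A hsym T₂.hWf v hv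
          exact ⟨u, hu1, Or.inr hu2, fun hu => hexs u hu (Or.inr hu2)⟩
      set N := c.tog M s ex with hNdef
      have hNmatch : IsMatchingOn c.R c.V' N := c.tog_matching hM hsV hMcl hexs
      have hNsum : ∑ v, sc c.R N c.PZ v ≤ 0 := c.hpop_sum hNmatch
      have hPZcl := c.pz_closure hM hadj.ne T₁ T₂
      -- (v ∈ s ∨ v ∈ ex) is the same as the closure condition
      have hPZcl' : ∀ v, (v ∈ s ∨ v ∈ ex) → ∀ u, c.PZ v = some u →
          (u ∈ s ∨ u ∈ ex) := by
        intro v hv u hu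
        have hv' : v ∈ T₁.l ∨ v ∈ T₂.l ∨ v = T₁.w ∨ v = T₂.w := by
          rcases hv with h | h
          · rcases (hmem_s v).1 h with h | h
            · exact Or.inl h
            · exact Or.inr (Or.inl h)
          · rcases (hmem_ex v).1 h with h | h
            · exact Or.inr (Or.inr (Or.inl h))
            · exact Or.inr (Or.inr (Or.inr h))
        rcases hPZcl v hv' u hu with h | h | h | h
        · exact Or.inl (Or.inl h)
        · exact Or.inl (Or.inr h)
        · exact Or.inr ((hmem_ex u).2 (Or.inl h))
        · exact Or.inr ((hmem_ex u).2 (Or.inr h))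
      -- the surgery matching
      set M'' : V → Option V := fun v =>
        if v ∈ s ∨ v ∈ ex then c.PZ v
        else if ∃ u, M v = some u ∧ (u ∈ s ∨ u ∈ ex) then none
        else M v with hM''def
      have hM''_in : ∀ v, (v ∈ s ∨ v ∈ ex) → M'' v = c.PZ v := by
        intro v hv; rw [hM''def]; simp only [if_pos hv]
      have hM''_guard : ∀ v, ¬ (v ∈ s ∨ v ∈ ex) →
          (∃ u, M v = some u ∧ (u ∈ s ∨ u ∈ ex)) → M'' v = none := by
        intro v hv hg; rw [hM''def]
        simp only [if_neg hv, if_pos hg]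
      have hM''_out : ∀ v, ¬ (v ∈ s ∨ v ∈ ex) →
          ¬ (∃ u, M v = some u ∧ (u ∈ s ∨ u ∈ ex)) → M'' v = M v := by
        intro v hv hg; rw [hM''def]
        simp only [if_neg hv, if_neg hg]
      have hsubV : ∀ v, (v ∈ s ∨ v ∈ ex) → v ∈ c.V' := by
        rintro v (h | h)
        · exact hsV v h
        · rcases (hmem_ex v).1 h with rfl | rfl
          · exact T₁.hwV
          · exact T₂.hwV
      have hM''match : IsMatching c.R M'' := by
        intro u v huv
        by_cases h1 : u ∈ s ∨ u ∈ ex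
        · rw [hM''_in u h1] at huv
          have hv1 : v ∈ s ∨ v ∈ ex := hPZcl' u h1 v huv
          refine ⟨(c.hPZm u v huv).1, ?_⟩
          rw [hM''_in v hv1]
          exact (c.hPZm u v huv).2
        · by_cases h2 : ∃ u', M u = some u' ∧ (u' ∈ s ∨ u' ∈ ex)
          · rw [hM''_guard u h1 h2] at huv; cases huv
          · rw [hM''_out u h1 h2] at huv
            refine ⟨(hM u v huv).1, ?_⟩
            have hv1 : ¬ (v ∈ s ∨ v ∈ ex) := fun hv => h2 ⟨v, huv, hv⟩
            have hv2 : ¬ (∃ u', M v = some u' ∧ (u' ∈ s ∨ u' ∈ ex)) := by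
              rintro ⟨u', hu1, hu2⟩
              rw [hsym u v huv] at hu1
              cases hu1
              exact h1 hu2
            rw [hM''_out v hv1 hv2]
            exact hsym u v huv
      -- evaluation of N
      have hN_s : ∀ v ∈ s, N v = M v := by
        intro v hv
        rw [hNdef]
        show c.tog M s ex v = M v
        unfold tog
        rw [if_neg (fun hv2 => hexs v hv2 hv), if_pos hv]
      have hN_ex : ∀ v ∈ ex, N v = none := by
        intro v hv
        rw [hNdef]
        show c.tog M s ex v = none
        unfold tog
        rw [if_pos hv]
      have hN_out : ∀ v, ¬ (v ∈ s ∨ v ∈ ex) → N v = c.PZ v := by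
        intro v hv
        rw [hNdef]
        show c.tog M s ex v = c.PZ v
        unfold tog
        rw [if_neg (fun h => hv (Or.inr h)), if_neg (fun h => hv (Or.inl h)),
          if_neg]
        rintro ⟨u, hu1, hu2⟩
        have := hPZcl' u hu2 v (c.hPZm v u hu1).2
        exact hv this
      -- score of an end vertex of a trail
      have hend_score : ∀ (a b : V) (T : EndTrail c M a b),
          T.w ∉ T.l → (∀ vv ∈ T.l, vv ∈ c.V') → sc c.R M c.P T.w = -1 := by
        intro a b T hwl hTV
        have hPw : c.P T.w = c.PZ T.w := c.hPV' T.w T.hwV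
        have hPww : c.P T.w = some T.z := by
          rw [hPw]; exact (c.hPZm T.z T.w T.hPZzw).2
        rcases T.hstop with hst | ⟨bb, hb1, hb2, _⟩
        · exact sc_none_some hst hPww
        · have hbz : bb ≠ T.z := by
            intro hbz
            have hMz : M T.z = some T.w := by
              rw [← hbz]; exact hsym T.w bb hb1
            obtain ⟨u, hu1, hu2, _⟩ :=
              c.twf_M1A hsym T.hWf T.z (mem_of_getLast?' T.hz)
            rw [hMz] at hu1
            exact hwl ((Option.some.inj hu1) ▸ hu2)
          unfold VotePlus at hb2
          push_neg at hb2
          obtain ⟨w', hw1, hw2⟩ := hb2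
          have hwz : w' = T.z := by
            rw [hPww] at hw1; exact (Option.some.inj hw1).symm
          rw [sc_some_some hb1 hPww hbz (hM T.w bb hb1).1
            (c.hPm T.w T.z hPww).1, if_neg]
          rw [hwz] at hw2
          omega
      -- the pointwise score ledger
      have hledger : ∀ v, sc c.R M c.P v = sc c.R M'' c.P v + sc c.R N c.PZ v := by
        intro v
        by_cases hv1 : v ∈ s
        · have e1 : sc c.R M c.P v = sc c.R N c.PZ v :=
            sc_congr (hN_s v hv1).symm (c.hPV' v (hsV v hv1))
          have e2 : sc c.R M'' c.P v = 0 := by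
            refine sc_eq ?_
            rw [hM''_in v (Or.inl hv1), c.hPV' v (hsV v hv1)]
          omega
        by_cases hv2 : v ∈ ex
        · have hvV : v ∈ c.V' := hsubV v (Or.inr hv2)
          have e2 : sc c.R M'' c.P v = 0 := by
            refine sc_eq ?_
            rw [hM''_in v (Or.inr hv2), c.hPV' v hvV]
          have hPZv : ∃ zz, c.PZ v = some zz := by
            rcases (hmem_ex v).1 hv2 with rfl | rfl
            · exact ⟨T₁.z, hPZw1⟩
            · exact ⟨T₂.z, hPZw2⟩
          obtain ⟨zz, hzz⟩ := hPZv
          have e3 : sc c.R N c.PZ v = -1 := sc_none_some (hN_ex v hv2) hzz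
          have e1 : sc c.R M c.P v = -1 := by
            rcases (hmem_ex v).1 hv2 with rfl | rfl
            · exact hend_score x y T₁ T₁.hwl (fun vv hvv => hsV vv (Or.inl hvv))
            · exact hend_score y x T₂ T₂.hwl (fun vv hvv => hsV vv (Or.inr hvv))
          omega
        -- v outside s ∪ ex
        have hvno : ¬ (v ∈ s ∨ v ∈ ex) := by rintro (h | h); exacts [hv1 h, hv2 h]
        have e3 : sc c.R N c.PZ v = 0 := sc_eq (hN_out v hvno)
        by_cases hg : ∃ u, M v = some u ∧ (u ∈ s ∨ u ∈ ex)
        · obtain ⟨u, hu1, hu2⟩ := hg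
          have hu3 : u = T₁.w ∨ u = T₂.w := by
            rcases hu2 with h | h
            · obtain ⟨u', hp1, hp2, _⟩ := hMcl u h
              rw [hsym v u hu1] at hp1
              cases hp1
              exact absurd hp2 hv1
            · exact (hmem_ex u).1 h
          have hM''v : M'' v = none :=
            hM''_guard v hvno ⟨u, hu1, hu2⟩
          rcases hu3 with rfl | rfl
          · -- v is the cut partner of T₁.w
            have hMw : M T₁.w = some v := hsym v T₁.w hu1
            rcases T₁.hstop with hst | ⟨bb, hb1, hb2, hb3⟩
            · rw [hst] at hMw; cases hMw
            have hbv : bb = v := by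
              rw [hb1] at hMw; exact Option.some.inj hMw
            rw [hbv] at hb3
            unfold VotePlus at hb3
            push_neg at hb3
            obtain ⟨w', hw1, hw2⟩ := hb3
            have hww' : w' ≠ T₁.w := by
              intro heq
              have h5 : c.P T₁.w = some v := by
                rw [← heq]; exact (c.hPm v w' hw1).2
              rw [c.hPV' T₁.w T₁.hwV, hPZw1] at h5
              have h6 : T₁.z = v := Option.some.inj h5
              exact hv1 (h6 ▸ (Or.inl hz1l))
            have e1 : sc c.R M c.P v = -1 := by
              rw [sc_some_some hu1 hw1 (fun h => hww' h.symm) (hM v T₁.w hu1).1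
                (c.hPm v w' hw1).1, if_neg (by omega)]
            have e2 : sc c.R M'' c.P v = -1 := sc_none_some hM''v hw1
            omega
          · -- v is the cut partner of T₂.w
            have hMw : M T₂.w = some v := hsym v T₂.w hu1
            rcases T₂.hstop with hst | ⟨bb, hb1, hb2, hb3⟩
            · rw [hst] at hMw; cases hMw
            have hbv : bb = v := by
              rw [hb1] at hMw; exact Option.some.inj hMw
            rw [hbv] at hb3
            unfold VotePlus at hb3
            push_neg at hb3
            obtain ⟨w', hw1, hw2⟩ := hb3
            have hww' : w' ≠ T₂.w := by
              intro heq
              have h5 : c.P T₂.w = some v := by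
                rw [← heq]; exact (c.hPm v w' hw1).2
              rw [c.hPV' T₂.w T₂.hwV, hPZw2] at h5
              have h6 : T₂.z = v := Option.some.inj h5
              exact hv1 (h6 ▸ (Or.inr hz2l))
            have e1 : sc c.R M c.P v = -1 := by
              rw [sc_some_some hu1 hw1 (fun h => hww' h.symm) (hM v T₂.w hu1).1
                (c.hPm v w' hw1).1, if_neg (by omega)]
            have e2 : sc c.R M'' c.P v = -1 := sc_none_some hM''v hw1
            omega
        · have e1 : sc c.R M c.P v = sc c.R M'' c.P v :=
            sc_congr (hM''_out v hvno hg).symm rfl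
          omega
      -- sum up the ledger
      have hsum_split : ∑ v, sc c.R M c.P v =
          ∑ v, sc c.R M'' c.P v + ∑ v, sc c.R N c.PZ v := by
        rw [← Finset.sum_add_distrib]
        exact Finset.sum_congr rfl (fun v _ => hledger v)
      -- the bad-edge count strictly decreases
      have hxmem : x ∈ Finset.univ.filter
          (fun v => ∃ u, M v = some u ∧ Blocks c.R c.P v u) :=
        Finset.mem_filter.2 ⟨Finset.mem_univ x, y, hMxy, hB⟩
      have hsubbad : Finset.univ.filter
          (fun v => ∃ u, M'' v = some u ∧ Blocks c.R c.P v u) ⊆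
          (Finset.univ.filter
            (fun v => ∃ u, M v = some u ∧ Blocks c.R c.P v u)).erase x := by
        intro v hv
        rw [Finset.mem_filter] at hv
        obtain ⟨-, u, hu1, hu2⟩ := hv
        by_cases h1 : v ∈ s ∨ v ∈ ex
        · exfalso
          rw [hM''_in v h1] at hu1
          have : c.P v = some u := by rw [c.hPV' v (hsubV v h1)]; exact hu1
          exact hu2.2.1 this
        · by_cases h2 : ∃ u', M v = some u' ∧ (u' ∈ s ∨ u' ∈ ex)
          · rw [hM''_guard v h1 h2] at hu1; cases hu1
          · rw [hM''_out v h1 h2] at hu1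
            refine Finset.mem_erase.2 ⟨?_, Finset.mem_filter.2
              ⟨Finset.mem_univ v, u, hu1, hu2⟩⟩
            intro hvx
            exact h1 (Or.inl (hvx ▸ (Or.inl hxl1)))
      have hcard'' : (Finset.univ.filter
          (fun v => ∃ u, M'' v = some u ∧ Blocks c.R c.P v u)).card ≤ n := by
        have h1 := Finset.card_le_card hsubbad
        rw [Finset.card_erase_of_mem hxmem] at h1
        omega
      have hih := ih M'' hM''match hcard''
      omega

end Ctx
section Final

variable {V : Type*} [Fintype V]

theorem claim4_backward' (R : Roommates V)
    (U : Set V)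
    (Z : Set V) (hZ : Z = {w | w ∉ U ∧ ∀ x ∈ U, ¬ R.G.Adj w x})
    (PZ : V → Option V) (hPZ : IsMatching R PZ)
    (hcov : ∀ z ∈ Z, ∃ y, PZ z = some y)
    (hmeet : ∀ u v, PZ u = some v → u ∈ Z ∨ v ∈ Z)
    (V' : Set V) (hV' : V' = Z ∪ {y | ∃ z ∈ Z, PZ z = some y} ∪ U)
    (hpopZ : PopularOn R V' PZ)
    (D : Set V)
    (hD : D = {z | ∃ (l : List V) (x y : V) (t : List V),
      l = x :: y :: t ∧ x ∈ V' ∧ y ∈ V' ∧ Blocks R PZ x y ∧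
      AltList (fun a b => a ∈ V' ∧ b ∈ V' ∧ NonMatchEdge R PZ a b) PZ false l ∧
      l.Nodup ∧ Odd l.length ∧ l.getLast? = some z})
    (S : V → Option V) (hS : IsMatching R S)
    (hSin : ∀ u v, S u = some v → u ∉ V' ∧ v ∉ V')
    (hScov : ∀ x, x ∉ V' → ∃ y, S x = some y)
    (hSstab : ∀ p q, p ∉ V' → q ∉ V' → ¬ Blocks R S p q)
    (P : V → Option V) (hPdef : ∀ v, P v = (PZ v).or (S v))
    (lab1 : ∀ u ∈ U, ∀ v, R.G.Adj u v → ∃ w, P v = some w ∧ R.rank v w < R.rank v u)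
    (lab2 : ∀ z ∈ D, ∀ x, x ∉ V' → R.G.Adj z x →
      ¬ VotePlus R P z x ∧ ¬ VotePlus R P x z)
    (lab3 : ∀ v', v' ∈ V' → v' ∉ D → v' ∉ U → ∀ x, x ∉ V' → R.G.Adj v' x →
      VotePlus R P v' x → ¬ VotePlus R P x v') :
    IsMatching R P ∧ Popular R P ∧ (∀ v, P v = none ↔ v ∈ U) := by
  classical
  -- basic structural facts
  have hPZU : ∀ u ∈ U, PZ u = none := by
    intro u hu
    rcases h : PZ u with _ | v
    · rfl
    · exfalso
      rcases hmeet u v h with hz | hz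
      · rw [hZ] at hz; exact hz.1 hu
      · rw [hZ] at hz
        exact hz.2 u hu (hPZ u v h).1.symm
  have hPZV'mem : ∀ u v, PZ u = some v → u ∈ V' ∧ v ∈ V' := by
    intro u v h
    rcases hmeet u v h with hz | hz
    · constructor
      · rw [hV']; exact Or.inl (Or.inl hz)
      · rw [hV']; exact Or.inl (Or.inr ⟨u, hz, h⟩)
    · constructor
      · rw [hV']; exact Or.inl (Or.inr ⟨v, hz, (hPZ u v h).2⟩)
      · rw [hV']; exact Or.inl (Or.inl hz)
  have hSV' : ∀ v ∈ V', S v = none := by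
    intro v hv
    rcases h : S v with _ | w
    · rfl
    · exact absurd hv (hSin v w h).1
  have hPeq : ∀ v ∈ V', P v = PZ v := by
    intro v hv
    rw [hPdef]
    rcases h : PZ v with _ | w
    · rw [hSV' v hv]; rfl
    · rfl
  have hPZout : ∀ v, v ∉ V' → PZ v = none := by
    intro v hv
    rcases h : PZ v with _ | w
    · rfl
    · exact absurd (hPZV'mem v w h).1 hv
  have hPout : ∀ v, v ∉ V' → P v = S v := by
    intro v hv
    rw [hPdef, hPZout v hv]
    rfl
  have hUV' : ∀ u ∈ U, u ∈ V' := by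
    intro u hu; rw [hV']; exact Or.inr hu
  have hPnone : ∀ v, P v = none ↔ v ∈ U := by
    intro v
    constructor
    · intro h
      rw [hPdef] at h
      have h1 : PZ v = none := by
        rcases h2 : PZ v with _ | w
        · rfl
        · rw [h2] at h; cases h
      have h2 : S v = none := by
        rw [h1] at h; exact h
      by_contra hvU
      by_cases hvV : v ∈ V'
      · rw [hV'] at hvV
        rcases hvV with (hz | hz) | hz
        · obtain ⟨w, hw⟩ := hcov v hz
          rw [hw] at h1; cases h1
        · obtain ⟨z, hz1, hz2⟩ := hz
          rw [(hPZ z v hz2).2] at h1; cases h1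
        · exact hvU hz
      · obtain ⟨w, hw⟩ := hScov v hvV
        rw [hw] at h2; cases h2
    · intro hu
      rw [hPdef, hPZU v hu, hSV' v (hUV' v hu)]
      rfl
  have hPmatch : IsMatching R P := by
    intro u v huv
    rcases h : PZ u with _ | w
    · have hu' : P u = S u := by rw [hPdef, h]; rfl
      rw [hu'] at huv
      have hv' : v ∉ V' := (hSin u v huv).2
      refine ⟨(hS u v huv).1, ?_⟩
      rw [hPout v hv', (hS u v huv).2]
    · have huV : u ∈ V' := (hPZV'mem u w h).1
      rw [hPeq u huV, h] at huv
      have hvw : w = v := Option.some.inj huv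
      rw [hvw] at h
      refine ⟨(hPZ u v h).1, ?_⟩
      rw [hPeq v (hPZV'mem u v h).2]
      exact (hPZ u v h).2
  -- blocking edges of P are inside V'
  have hbadloc : ∀ x y, R.G.Adj x y → P x ≠ some y → VotePlus R P x y →
      VotePlus R P y x → x ∈ V' ∧ y ∈ V' := by
    have key : ∀ x y, R.G.Adj x y → P x ≠ some y → VotePlus R P x y →
        VotePlus R P y x → x ∉ V' → False := by
      intro x y hadj hPne hvxy hvyx hx
      by_cases hy : y ∈ V'
      · by_cases hyU : y ∈ U
        · obtain ⟨w, hw1, hw2⟩ := lab1 y hyU x hadj.symm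
          have := hvxy w hw1
          omega
        · by_cases hyD : y ∈ D
          · exact (lab2 y hyD x hx hadj.symm).1 hvyx
          · exact lab3 y hy hyD hyU x hx hadj.symm hvyx hvxy
      · -- both outside : S would be blocked
        refine hSstab x y hx hy ⟨hadj, ?_, ?_, ?_⟩
        · rw [← hPout x hx]; exact hPne
        · rw [← hPout x hx]; exact hvxy
        · rw [← hPout y hy]; exact hvyx
    intro x y hadj hPne hvxy hvyx
    have hPne' : P y ≠ some x := fun h2 => hPne (hPmatch y x h2).2
    constructor
    · by_contra hx
      exact key x y hadj hPne hvxy hvyx hx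
    · by_contra hy
      exact key y x hadj.symm hPne' hvyx hvxy hy
  -- the cut condition
  have hcutp : ∀ (l : List V) (x y : V) (t : List V) (w : V),
      l = x :: y :: t → x ∈ V' → y ∈ V' → Blocks R PZ x y →
      AltList (Arel V R PZ V') PZ false l →
      l.Nodup → Odd l.length → l.getLast? = some w →
      ∀ b, b ∉ V' → R.G.Adj w b → ¬ VotePlus R P w b ∧ ¬ VotePlus R P b w := by
    intro l x y t w hl hx hy hB halt hnd hodd hlast b hb hadjw
    have hwD : w ∈ D := by
      rw [hD]
      exact ⟨l, x, y, t, hl, hx, hy, hB, halt, hnd, hodd, hlast⟩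
    exact lab2 w hwD b hb hadjw
  set c : Ctx V :=
    ⟨R, PZ, V', P, hPZ, hPZV'mem, hPmatch, hPeq, hpopZ, hbadloc, hcutp⟩ with hc
  refine ⟨hPmatch, ?_, hPnone⟩
  intro M' hM'
  have hsum := c.main_sum
    (Finset.univ.filter
      (fun v => ∃ u, M' v = some u ∧ Blocks R P v u)).card M' hM' le_rfl
  have e1 : {v | Prefers R M' P v} = {v | v ∈ (Set.univ : Set V) ∧ Prefers R M' P v} := by
    ext v; simp
  have e2 : {v | Prefers R P M' v} = {v | v ∈ (Set.univ : Set V) ∧ Prefers R P M' v} := by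
    ext v; simp
  rw [e1, e2, ncard_le_iff_sum]
  refine le_trans (le_of_eq (Finset.sum_congr ?_ (fun _ _ => rfl))) hsum
  ext v
  simp [Set.mem_toFinset]

end Final

/-- Claim 4, backward direction: if `P_Z` is popular but not
stable in `G' = G[V']`, and `S` is a matching on `G[V ∖ V']` that is stable,
covers exactly `V ∖ V'`, and `P = P_Z ∪ S` induces the three-point edge
labeling, then `P` is a popular matching of `G` leaving exactly `U` uncovered. -/
theorem claim4_backward {V : Type*} [Fintype V] (R : Roommates V)
    (U : Set V)
    (Z : Set V) (hZ : Z = {w | w ∉ U ∧ ∀ x ∈ U, ¬ R.G.Adj w x})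
    (PZ : V → Option V) (hPZ : IsMatching R PZ)
    (hcov : ∀ z ∈ Z, ∃ y, PZ z = some y)
    (hmeet : ∀ u v, PZ u = some v → u ∈ Z ∨ v ∈ Z)
    (V' : Set V) (hV' : V' = Z ∪ {y | ∃ z ∈ Z, PZ z = some y} ∪ U)
    (hpopZ : PopularOn R V' PZ) (hnotstabZ : ¬ StableOn R V' PZ)
    (D : Set V)
    (hD : D = {z | ∃ (l : List V) (x y : V) (t : List V),
      l = x :: y :: t ∧ x ∈ V' ∧ y ∈ V' ∧ Blocks R PZ x y ∧
      AltList (fun a b => a ∈ V' ∧ b ∈ V' ∧ NonMatchEdge R PZ a b) PZ false l ∧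
      l.Nodup ∧ Odd l.length ∧ l.getLast? = some z})
    (S : V → Option V) (hS : IsMatching R S)
    (hSin : ∀ u v, S u = some v → u ∉ V' ∧ v ∉ V')
    (hScov : ∀ x, x ∉ V' → ∃ y, S x = some y)
    (hSstab : ∀ p q, p ∉ V' → q ∉ V' → ¬ Blocks R S p q)
    (P : V → Option V) (hPdef : ∀ v, P v = (PZ v).or (S v))
    -- labeling condition 1: edges at `U` are `(+,−)` with `+` at the `U`-vertex
    (lab1 : ∀ u ∈ U, ∀ v, R.G.Adj u v → ∃ w, P v = some w ∧ R.rank v w < R.rank v u)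
    -- labeling condition 2: edges between `D` and `V ∖ V'` are `(−,−)`
    (lab2 : ∀ z ∈ D, ∀ x, x ∉ V' → R.G.Adj z x →
      ¬ VotePlus R P z x ∧ ¬ VotePlus R P x z)
    -- labeling condition 3: edges `(v',x)` with `v' ∈ V' ∖ (D ∪ U)`, `x ∉ V'`
    -- and `x ≻_{v'} P(v')` are `(+,−)` with `+` at `v'`
    (lab3 : ∀ v', v' ∈ V' → v' ∉ D → v' ∉ U → ∀ x, x ∉ V' → R.G.Adj v' x →
      VotePlus R P v' x → ¬ VotePlus R P x v') :
    IsMatching R P ∧ Popular R P ∧ (∀ v, P v = none ↔ v ∈ U) :=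
  claim4_backward' R U Z hZ PZ hPZ hcov hmeet V' hV' hpopZ D hD S hS hSin
    hScov hSstab P hPdef lab1 lab2 lab3
end

section
/- If a stable matching exists in the edge-deleted graph G[V ∖ V'] but does not cover all of V ∖ V', then no stable matching of that graph covers all of V ∖ V' (Rural Hospitals Theorem for stable roommates): all stable matchings of a roommates instance cover exactly the same set of vertices. -/
variable {V : Type*}

/-! ### Auxiliary machinery for the rural hospitals theorem -/

/-- Alternates between the two matchings: `M'` at even indices, `M` at odd. -/
private def Sw (M M' : V → Option V) (n : ℕ) : V → Option V :=
  if Even n then M' else M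

private lemma Sw_congr (M M' : V → Option V) {m n : ℕ} (h : m % 2 = n % 2) :
    Sw M M' m = Sw M M' n := by
  have he : Even m ↔ Even n := by rw [Nat.even_iff, Nat.even_iff, h]
  unfold Sw
  exact if_congr he rfl rfl

/-- The alternating walk starting at an `M`-unmatched, `M'`-matched vertex. -/
private def seqx (M M' : V → Option V) (v v1 : V) : ℕ → V
  | 0 => v
  | 1 => v1
  | n + 2 => (Sw M M' (n + 1) (seqx M M' v v1 (n + 1))).getD v

private lemma blocks_elim (R : Roommates V) (B : V → Option V)
    (hBs : IsStable R B) (u w' : V) (hadj : R.G.Adj u w')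
    (h2 : B u ≠ some w') (h3 : ∀ w, B u = some w → R.rank u w' < R.rank u w) :
    ∃ w, B w' = some w ∧ R.rank w' w ≤ R.rank w' u := by
  have hb := hBs u w'
  unfold Blocks at hb
  push_neg at hb
  obtain ⟨w, hw, hle⟩ := hb hadj h2 h3
  exact ⟨w, hw, hle⟩

private lemma seq_inv (R : Roommates V) (M M' : V → Option V)
    (hM : IsMatching R M) (hMs : IsStable R M)
    (hM' : IsMatching R M') (hM's : IsStable R M')
    (v v1 : V) (hv : M v = none) (hv1 : M' v = some v1) :
    ∀ n, Sw M M' n (seqx M M' v v1 n) = some (seqx M M' v v1 (n+1)) ∧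
      ∀ m, n = m + 1 →
        R.rank (seqx M M' v v1 n) (seqx M M' v v1 (n+1)) <
          R.rank (seqx M M' v v1 n) (seqx M M' v v1 m) ∧
        Sw M M' (n+1) (seqx M M' v v1 n) = some (seqx M M' v v1 m) := by
  have hSwM : ∀ n, IsMatching R (Sw M M' n) := by
    intro n; unfold Sw; split <;> assumption
  have hSwS : ∀ n, IsStable R (Sw M M' n) := by
    intro n; unfold Sw; split <;> assumption
  intro n
  induction n with
  | zero =>
    refine ⟨?_, by omega⟩
    show Sw M M' 0 v = some v1
    unfold Sw; simp [hv1]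
  | succ n ih =>
    set x := seqx M M' v v1 with hxdef
    obtain ⟨e1, e2⟩ := ih
    have hA : IsMatching R (Sw M M' n) := hSwM n
    have hB : IsMatching R (Sw M M' (n+1)) := hSwM (n+1)
    have hBs : IsStable R (Sw M M' (n+1)) := hSwS (n+1)
    have hadj : R.G.Adj (x n) (x (n+1)) := (hA _ _ e1).1
    have hAsym : Sw M M' n (x (n+1)) = some (x n) := (hA _ _ e1).2
    -- establish h2, h3 for the blocking argument
    have h23 : Sw M M' (n+1) (x n) ≠ some (x (n+1)) ∧
        (∀ w, Sw M M' (n+1) (x n) = some w → R.rank (x n) (x (n+1)) < R.rank (x n) w) := by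
      rcases n with _ | m
      · have h1 : Sw M M' 1 (x 0) = none := by
          show Sw M M' 1 v = none
          unfold Sw; simp [Nat.even_iff, hv]
        constructor
        · rw [h1]; simp
        · intro w hw; rw [h1] at hw; simp at hw
      · obtain ⟨hrk, hother⟩ := e2 m rfl
        constructor
        · intro h
          rw [hother] at h
          have : x m = x (m+1+1) := by injection h
          rw [← this] at hrk; omega
        · intro w hw
          rw [hother] at hw
          have : x m = w := by injection hw
          rw [← this]; exact hrk
    obtain ⟨h2, h3⟩ := h23
    obtain ⟨w, hw, hle⟩ := blocks_elim R _ hBs (x n) (x (n+1)) hadj h2 h3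
    have hx2 : x (n+2) = w := by
      show (Sw M M' (n+1) (seqx M M' v v1 (n+1))).getD v = w
      rw [← hxdef, hw]; rfl
    have hE : Sw M M' (n+1) (x (n+1)) = some (x (n+2)) := by rw [hx2]; exact hw
    have hRk : R.rank (x (n+1)) (x (n+2)) < R.rank (x (n+1)) (x n) := by
      rw [hx2]
      rcases lt_or_eq_of_le hle with h | h
      · exact h
      · exfalso
        have haw : R.G.Adj (x (n+1)) w := (hB _ _ hw).1
        have := R.rank_inj (x (n+1)) w (x n) haw hadj.symm h
        rw [this] at hw
        exact h2 (hB _ _ hw).2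
    refine ⟨hE, ?_⟩
    intro m hm
    have hmn : m = n := by omega
    rw [hmn]
    refine ⟨hRk, ?_⟩
    have hsw : Sw M M' (n+1+1) = Sw M M' n := Sw_congr M M' (by omega)
    rw [hsw]; exact hAsym

private lemma stable_none {V : Type*} [Fintype V] (R : Roommates V)
    (M M' : V → Option V)
    (hM : IsMatching R M) (hMs : IsStable R M)
    (hM' : IsMatching R M') (hM's : IsStable R M')
    (v : V) (hv : M v = none) : M' v = none := by
  by_contra h
  obtain ⟨v1, hv1⟩ : ∃ w, M' v = some w := by
    cases hh : M' v with
    | none => exact absurd hh h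
    | some w => exact ⟨w, rfl⟩
  set x := seqx M M' v v1 with hxdef
  have inv := seq_inv R M M' hM hMs hM' hM's v v1 hv hv1
  have hSwM : ∀ n, IsMatching R (Sw M M' n) := by
    intro n; unfold Sw; split <;> assumption
  have e1 : ∀ n, Sw M M' n (x n) = some (x (n+1)) := fun n => (inv n).1
  have e2 : ∀ n, Sw M M' (n+2) (x (n+1)) = some (x n) := fun n => ((inv (n+1)).2 n rfl).2
  have hM1 : Sw M M' 1 (x 0) = none := by
    show Sw M M' 1 v = none
    unfold Sw; simp [Nat.even_iff, hv]
  have key : ∀ b, ∀ a, a < b → x a ≠ x b := by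
    intro b
    induction b using Nat.strong_induction_on with
    | _ b ih =>
      intro a hab heq
      obtain ⟨b', rfl⟩ : ∃ b', b = b' + 1 := ⟨b - 1, by omega⟩
      have hb2 : Sw M M' (b'+2) (x (b'+1)) = some (x b') := e2 b'
      by_cases hp : a % 2 = (b'+1) % 2
      · -- same parity
        rcases a with _ | a'
        · -- a = 0
          have hsw : Sw M M' (b'+2) = Sw M M' 1 := Sw_congr M M' (by omega)
          rw [hsw, ← heq, hM1] at hb2
          exact Option.some_ne_none _ hb2.symm
        · have ha2 : Sw M M' (a'+2) (x (a'+1)) = some (x a') := e2 a'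
          have hsw : Sw M M' (a'+2) = Sw M M' (b'+2) := Sw_congr M M' (by omega)
          rw [hsw, heq, hb2] at ha2
          have : x b' = x a' := by injection ha2
          exact ih b' (by omega) a' (by omega) this.symm
      · -- opposite parity
        have h1 : Sw M M' a (x a) = some (x (a+1)) := e1 a
        rcases Nat.lt_or_ge (a+1) (b'+1) with hlt | hge
        · have hsw : Sw M M' a = Sw M M' (b'+2) := Sw_congr M M' (by omega)
          rw [hsw, heq, hb2] at h1
          have hxx : x b' = x (a+1) := by injection h1
          have : a + 1 ≠ b' := by omega
          have : a + 1 < b' := by omega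
          exact ih b' (by omega) (a+1) this hxx.symm
        · -- a + 1 = b' + 1, i.e. a = b'... but parity says a ≠ b'+1 differs; a < b'+1 so a ≤ b'
          have hab' : a = b' := by omega
          subst hab'
          rw [← heq] at h1
          exact R.G.irrefl (hSwM a _ _ h1).1
  obtain ⟨a, b, hne, hab⟩ := Finite.exists_ne_map_eq_of_infinite x
  rcases Nat.lt_or_ge a b with hlt | hge
  · exact key b a hlt hab
  · exact key a b (by omega) hab.symm

/-- Rural Hospitals Theorem for stable roommates: any two stable
matchings of a roommates instance cover exactly the same set of vertices. -/
theorem rural_hospitals {V : Type*} [Fintype V] (R : Roommates V)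
    (M M' : V → Option V)
    (hM : IsMatching R M) (hMs : IsStable R M)
    (hM' : IsMatching R M') (hM's : IsStable R M') :
    ∀ v, M v = none ↔ M' v = none := by
  intro v
  constructor
  · intro h; exact stable_none R M M' hM hMs hM' hM's v h
  · intro h; exact stable_none R M' M hM' hM's hM hMs v h
end

section
/- In a complete graph on an odd number n of vertices with strict preferences, every popular matching is stable. -/
variable {V : Type*}

section Aux
variable {V : Type*}

lemma not_prefers_of_eq (R : Roommates V) {M M' : V → Option V} {x : V}
    (h : M' x = M x) : ¬ Prefers R M M' x := by
  rintro (⟨w, h1, h2⟩ | ⟨w, w', h1, h2, hlt⟩)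
  · rw [h, h1] at h2; cases h2
  · rw [h, h1] at h2; cases h2; exact lt_irrefl _ hlt

lemma exists_unmatched [Fintype V] (R : Roommates V) (hodd : Odd (Fintype.card V))
    (M : V → Option V) (hM : IsMatching R M) : ∃ w, M w = none := by
  classical
  by_contra h
  push_neg at h
  choose f hf using fun v => Option.ne_none_iff_exists'.mp (h v)
  have hinv : ∀ v, f (f v) = v := by
    intro v
    have h1 : M (f v) = some v := (hM v (f v) (hf v)).2
    have h2 : M (f v) = some (f (f v)) := hf (f v)
    rw [h1] at h2
    exact (Option.some.inj h2).symm
  have hne : ∀ v, f v ≠ v := by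
    intro v hv
    have := (hM v (f v) (hf v)).1
    rw [hv] at this
    exact R.G.loopless.irrefl v this
  haveI : Fact (Nat.Prime 2) := ⟨Nat.prime_two⟩
  let g : Function.End V := f
  have hsq : g ^ 2 ^ 1 = 1 := by
    show g * (g * 1) = 1
    rw [mul_one]
    funext v
    exact hinv v
  have hmod := Equiv.Perm.card_fixedPoints_modEq (p := 2) (n := 1) hsq
  have hzero : Fintype.card (Function.fixedPoints g) = 0 :=
    Fintype.card_eq_zero_iff.mpr ⟨fun x => hne x x.2⟩
  rw [hzero] at hmod
  have : (2 : ℕ) ∣ Fintype.card V := (Nat.modEq_zero_iff_dvd).mp hmod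
  rw [← Nat.not_even_iff_odd] at hodd
  exact hodd (even_iff_two_dvd.mpr this)

end Aux


section Main
variable {V : Type*} [Fintype V]

lemma no_block_case1 (R : Roommates V) (M : V → Option V) (hM : IsMatching R M)
    (hpop : Popular R M) {u v : V} (hblk : Blocks R M u v)
    (hMu : M u = none) (hMv : M v = none) : False := by
  classical
  obtain ⟨hadj, -, -, -⟩ := hblk
  have huv : u ≠ v := R.G.ne_of_adj hadj
  let M' : V → Option V := fun x => if x = u then some v else if x = v then some u else M x
  have hM'u : M' u = some v := by simp [M']
  have hM'v : M' v = some u := by simp [M', huv.symm]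
  have hM'x : ∀ x, x ≠ u → x ≠ v → M' x = M x := by
    intro x h1 h2; simp [M', h1, h2]
  have hmatch : IsMatching R M' := by
    intro x y hxy
    by_cases h1 : x = u
    · subst h1; rw [hM'u] at hxy; cases hxy; exact ⟨hadj, hM'v⟩
    by_cases h2 : x = v
    · subst h2; rw [hM'v] at hxy; cases hxy; exact ⟨hadj.symm, hM'u⟩
    rw [hM'x x h1 h2] at hxy
    obtain ⟨hadjxy, hyx⟩ := hM x y hxy
    have hyu : y ≠ u := by intro h; rw [h, hMu] at hyx; cases hyx
    have hyv : y ≠ v := by intro h; rw [h, hMv] at hyx; cases hyx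
    exact ⟨hadjxy, by rw [hM'x y hyu hyv]; exact hyx⟩
  have hsub1 : ({u, v} : Set V) ⊆ {x | Prefers R M' M x} := by
    intro x hx
    simp only [Set.mem_insert_iff, Set.mem_singleton_iff] at hx
    rcases hx with rfl | rfl
    · exact Or.inl ⟨v, hM'u, hMu⟩
    · exact Or.inl ⟨u, hM'v, hMv⟩
  have hempty : {x | Prefers R M M' x} = ∅ := by
    ext x
    simp only [Set.mem_setOf_eq, Set.mem_empty_iff_false, iff_false]
    by_cases h1 : x = u
    · subst h1
      rintro (⟨w, hw1, -⟩ | ⟨w, w', hw1, -, -⟩) <;> rw [hMu] at hw1 <;> cases hw1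
    by_cases h2 : x = v
    · subst h2
      rintro (⟨w, hw1, -⟩ | ⟨w, w', hw1, -, -⟩) <;> rw [hMv] at hw1 <;> cases hw1
    exact not_prefers_of_eq R (hM'x x h1 h2)
  have hL : 2 ≤ {x | Prefers R M' M x}.ncard := by
    calc 2 = ({u, v} : Set V).ncard := (Set.ncard_pair huv).symm
      _ ≤ _ := Set.ncard_le_ncard hsub1 (Set.toFinite _)
  have := hpop M' hmatch
  rw [hempty, Set.ncard_empty] at this
  omega

lemma no_block_case2 (R : Roommates V) (M : V → Option V) (hM : IsMatching R M)
    (hpop : Popular R M) {u v a : V} (hblk : Blocks R M u v)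
    (hMu : M u = some a) (hMv : M v = none) : False := by
  classical
  obtain ⟨hadj, hne, hu, -⟩ := hblk
  have huv : u ≠ v := R.G.ne_of_adj hadj
  have hMa : M a = some u := (hM u a hMu).2
  have hau : a ≠ u := by
    intro h; rw [h] at hMu; exact R.G.loopless.irrefl u (hM u u hMu).1
  have hav : a ≠ v := by intro h; rw [h] at hMu; exact hne hMu
  let M' : V → Option V := fun x =>
    if x = u then some v else if x = v then some u else if x = a then none else M x
  have hM'u : M' u = some v := by simp [M']
  have hM'v : M' v = some u := by simp [M', huv.symm]
  have hM'a : M' a = none := by simp [M', hau, hav]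
  have hM'x : ∀ x, x ≠ u → x ≠ v → x ≠ a → M' x = M x := by
    intro x h1 h2 h3; simp [M', h1, h2, h3]
  have hmatch : IsMatching R M' := by
    intro x y hxy
    by_cases h1 : x = u
    · subst h1; rw [hM'u] at hxy; cases hxy; exact ⟨hadj, hM'v⟩
    by_cases h2 : x = v
    · subst h2; rw [hM'v] at hxy; cases hxy; exact ⟨hadj.symm, hM'u⟩
    by_cases h3 : x = a
    · subst h3; rw [hM'a] at hxy; cases hxy
    rw [hM'x x h1 h2 h3] at hxy
    obtain ⟨hadjxy, hyx⟩ := hM x y hxy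
    have hyu : y ≠ u := by
      intro h; rw [h, hMu] at hyx; cases hyx; exact h3 rfl
    have hyv : y ≠ v := by intro h; rw [h, hMv] at hyx; cases hyx
    have hya : y ≠ a := by
      intro h; rw [h, hMa] at hyx; cases hyx; exact h1 rfl
    exact ⟨hadjxy, by rw [hM'x y hyu hyv hya]; exact hyx⟩
  have hsub1 : ({u, v} : Set V) ⊆ {x | Prefers R M' M x} := by
    intro x hx
    simp only [Set.mem_insert_iff, Set.mem_singleton_iff] at hx
    rcases hx with rfl | rfl
    · exact Or.inr ⟨v, a, hM'u, hMu, hu a hMu⟩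
    · exact Or.inl ⟨u, hM'v, hMv⟩
  have hsub2 : {x | Prefers R M M' x} ⊆ ({a} : Set V) := by
    intro x hx
    simp only [Set.mem_setOf_eq] at hx
    simp only [Set.mem_singleton_iff]
    by_cases h1 : x = u
    · exfalso; subst h1
      rcases hx with ⟨w, hw1, hw2⟩ | ⟨w, w', hw1, hw2, hlt⟩
      · rw [hM'u] at hw2; cases hw2
      · rw [hMu] at hw1; cases hw1
        rw [hM'u] at hw2; cases hw2
        exact lt_asymm (hu a hMu) hlt
    by_cases h2 : x = v
    · exfalso; subst h2
      rcases hx with ⟨w, hw1, -⟩ | ⟨w, w', hw1, -, -⟩ <;> rw [hMv] at hw1 <;> cases hw1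
    by_cases h3 : x = a
    · exact h3
    exact absurd hx (not_prefers_of_eq R (hM'x x h1 h2 h3))
  have hL : 2 ≤ {x | Prefers R M' M x}.ncard := by
    calc 2 = ({u, v} : Set V).ncard := (Set.ncard_pair huv).symm
      _ ≤ _ := Set.ncard_le_ncard hsub1 (Set.toFinite _)
  have hR : {x | Prefers R M M' x}.ncard ≤ 1 := by
    calc {x | Prefers R M M' x}.ncard ≤ ({a} : Set V).ncard :=
          Set.ncard_le_ncard hsub2 (Set.toFinite _)
      _ = 1 := Set.ncard_singleton a
  have := hpop M' hmatch
  omega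

lemma no_block_case3 (R : Roommates V) (hcomplete : R.G = ⊤)
    (hodd : Odd (Fintype.card V)) (M : V → Option V) (hM : IsMatching R M)
    (hpop : Popular R M) {u v a b : V} (hblk : Blocks R M u v)
    (hMu : M u = some a) (hMv : M v = some b) : False := by
  classical
  obtain ⟨hadj, hne, hu, hv⟩ := hblk
  have huv : u ≠ v := R.G.ne_of_adj hadj
  have hMa : M a = some u := (hM u a hMu).2
  have hMb : M b = some v := (hM v b hMv).2
  have hau : a ≠ u := by
    intro h; rw [h] at hMu; exact R.G.loopless.irrefl u (hM u u hMu).1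
  have hav : a ≠ v := by intro h; rw [h] at hMu; exact hne hMu
  have hbv : b ≠ v := by
    intro h; rw [h] at hMv; exact R.G.loopless.irrefl v (hM v v hMv).1
  have hbu : b ≠ u := by intro h; rw [h] at hMb; exact hne hMb
  have hab : a ≠ b := by
    intro h; rw [h, hMb] at hMa; cases hMa; exact huv rfl
  obtain ⟨w, hMw⟩ := exists_unmatched R hodd M hM
  have hwu : w ≠ u := by intro h; rw [h, hMu] at hMw; cases hMw
  have hwv : w ≠ v := by intro h; rw [h, hMv] at hMw; cases hMw
  have hwa : w ≠ a := by intro h; rw [h, hMa] at hMw; cases hMw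
  have hwb : w ≠ b := by intro h; rw [h, hMb] at hMw; cases hMw
  have hadj_aw : R.G.Adj a w := by
    rw [hcomplete]; exact fun h => hwa (h.symm)
  let M' : V → Option V := fun x =>
    if x = u then some v else if x = v then some u else
    if x = a then some w else if x = w then some a else
    if x = b then none else M x
  have hM'u : M' u = some v := by simp [M']
  have hM'v : M' v = some u := by simp [M', huv.symm]
  have hM'a : M' a = some w := by simp [M', hau, hav]
  have hM'w : M' w = some a := by simp [M', hwu, hwv, hwa]
  have hM'b : M' b = none := by simp [M', hbu, hbv, hab.symm, hwb.symm]
  have hM'x : ∀ x, x ≠ u → x ≠ v → x ≠ a → x ≠ w → x ≠ b → M' x = M x := by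
    intro x h1 h2 h3 h4 h5; simp [M', h1, h2, h3, h4, h5]
  have hmatch : IsMatching R M' := by
    intro x y hxy
    by_cases h1 : x = u
    · subst h1; rw [hM'u] at hxy; cases hxy; exact ⟨hadj, hM'v⟩
    by_cases h2 : x = v
    · subst h2; rw [hM'v] at hxy; cases hxy; exact ⟨hadj.symm, hM'u⟩
    by_cases h3 : x = a
    · subst h3; rw [hM'a] at hxy; cases hxy; exact ⟨hadj_aw, hM'w⟩
    by_cases h4 : x = w
    · subst h4; rw [hM'w] at hxy; cases hxy; exact ⟨hadj_aw.symm, hM'a⟩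
    by_cases h5 : x = b
    · subst h5; rw [hM'b] at hxy; cases hxy
    rw [hM'x x h1 h2 h3 h4 h5] at hxy
    obtain ⟨hadjxy, hyx⟩ := hM x y hxy
    have hyu : y ≠ u := by
      intro h; rw [h, hMu] at hyx; cases hyx; exact h3 rfl
    have hyv : y ≠ v := by
      intro h; rw [h, hMv] at hyx; cases hyx; exact h5 rfl
    have hya : y ≠ a := by
      intro h; rw [h, hMa] at hyx; cases hyx; exact h1 rfl
    have hyw : y ≠ w := by intro h; rw [h, hMw] at hyx; cases hyx
    have hyb : y ≠ b := by
      intro h; rw [h, hMb] at hyx; cases hyx; exact h2 rfl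
    exact ⟨hadjxy, by rw [hM'x y hyu hyv hya hyw hyb]; exact hyx⟩
  have hsub1 : ({u, v, w} : Set V) ⊆ {x | Prefers R M' M x} := by
    intro x hx
    simp only [Set.mem_insert_iff, Set.mem_singleton_iff] at hx
    rcases hx with rfl | rfl | rfl
    · exact Or.inr ⟨v, a, hM'u, hMu, hu a hMu⟩
    · exact Or.inr ⟨u, b, hM'v, hMv, hv b hMv⟩
    · exact Or.inl ⟨a, hM'w, hMw⟩
  have hsub2 : {x | Prefers R M M' x} ⊆ ({a, b} : Set V) := by
    intro x hx
    simp only [Set.mem_setOf_eq] at hx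
    simp only [Set.mem_insert_iff, Set.mem_singleton_iff]
    by_cases h1 : x = u
    · exfalso; subst h1
      rcases hx with ⟨w', hw1, hw2⟩ | ⟨w', w'', hw1, hw2, hlt⟩
      · rw [hM'u] at hw2; cases hw2
      · rw [hMu] at hw1; cases hw1
        rw [hM'u] at hw2; cases hw2
        exact lt_asymm (hu a hMu) hlt
    by_cases h2 : x = v
    · exfalso; subst h2
      rcases hx with ⟨w', hw1, hw2⟩ | ⟨w', w'', hw1, hw2, hlt⟩
      · rw [hM'v] at hw2; cases hw2
      · rw [hMv] at hw1; cases hw1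
        rw [hM'v] at hw2; cases hw2
        exact lt_asymm (hv b hMv) hlt
    by_cases h4 : x = w
    · exfalso; subst h4
      rcases hx with ⟨w', hw1, -⟩ | ⟨w', w'', hw1, -, -⟩ <;> rw [hMw] at hw1 <;> cases hw1
    by_cases h3 : x = a
    · exact Or.inl h3
    by_cases h5 : x = b
    · exact Or.inr h5
    exact absurd hx (not_prefers_of_eq R (hM'x x h1 h2 h3 h4 h5))
  have hL : 3 ≤ {x | Prefers R M' M x}.ncard := by
    have h3 : ({u, v, w} : Set V).ncard = 3 := by
      rw [Set.ncard_insert_of_notMem (by simp [huv, hwu.symm]),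
        Set.ncard_pair (Ne.symm hwv)]
    calc 3 = ({u, v, w} : Set V).ncard := h3.symm
      _ ≤ _ := Set.ncard_le_ncard hsub1 (Set.toFinite _)
  have hR : {x | Prefers R M M' x}.ncard ≤ 2 := by
    calc {x | Prefers R M M' x}.ncard ≤ ({a, b} : Set V).ncard :=
          Set.ncard_le_ncard hsub2 (Set.toFinite _)
      _ ≤ 2 := le_trans (Set.ncard_insert_le _ _) (by simp)
  have := hpop M' hmatch
  omega

end Main

/-- in a complete graph on an odd number of vertices with strict
preferences, every popular matching is stable. -/
theorem popular_is_stable_complete_odd {V : Type*} [Fintype V] (R : Roommates V)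
    (hcomplete : R.G = ⊤) (hodd : Odd (Fintype.card V))
    (M : V → Option V) (hM : IsMatching R M) (hpop : Popular R M) :
    IsStable R M := by
  intro u v hblk
  have hswap : Blocks R M v u :=
    ⟨hblk.1.symm, fun h => hblk.2.1 (hM v u h).2, hblk.2.2.2, hblk.2.2.1⟩
  rcases hMu : M u with _ | a <;> rcases hMv : M v with _ | b
  · exact no_block_case1 R M hM hpop hblk hMu hMv
  · exact no_block_case2 R M hM hpop hswap hMv hMu
  · exact no_block_case2 R M hM hpop hblk hMu hMv
  · exact no_block_case3 R hcomplete hodd M hM hpop hblk hMu hMv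
end
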